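/- arXiv:math/0009037 — 5 statements merged into one kernel-verified Lean document; each statement's English description precedes it below -/
import Mathlib

section
/- Let p ≥ 1 be an integer. Then the sequence C(n,p) = exp( (1/p)·∑_{j=1}^n 1/j ) · ∏_{j=1}^n (j·p/(j·p+1)) converges as n → ∞ to the positive limit exp( ∑_{m=2}^∞ ((−1)^m / (m·p^m)) · ζ(m) ), where ζ(m) = ∑_{k=1}^∞ k^{−m} is the Riemann zeta function. -/
open Filter Topology

open Finset

section aux

lemma icc_sum_eq' (x : ℝ) : ∀ n : ℕ, ∑ m ∈ Finset.Icc 2 (n+1), (-1:ℝ)^m * x^m / m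
    = ∑ i ∈ Finset.range n, (-1:ℝ)^i * (x^(i+2)/(i+2)) := by
  intro n
  induction n with
  | zero => simp
  | succ n ih =>
    rw [Finset.sum_Icc_succ_top (by omega), ih, Finset.sum_range_succ]
    push_cast
    rw [show ((-1:ℝ))^(n+1+1) = (-1:ℝ)^n * (-1)^2 from by rw [← pow_add], show (n:ℝ)+1+1 = (n:ℝ)+2 from by ring]
    ring

lemma icc_sum_eq (x : ℝ) (M : ℕ) :
    ∑ m ∈ Finset.Icc 2 M, (-1:ℝ)^m * x^m / m
      = ∑ i ∈ Finset.range (M - 1), (-1:ℝ)^i * (x^(i+2)/(i+2)) := by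
  rcases M with _ | M
  · simp
  · simpa using icc_sum_eq' x M

lemma key_tendsto_and_bound (x : ℝ) (hx0 : 0 < x) (hx1 : x ≤ 1)
    (hid : Tendsto (fun n : ℕ => ∑ i ∈ Finset.range n, (-1:ℝ)^i * (x^(i+2)/(i+2))) atTop
      (𝓝 (x - Real.log (1+x)))) :
    Tendsto (fun M : ℕ => ∑ m ∈ Finset.Icc 2 M, (-1:ℝ)^m * x^m / m) atTop
      (𝓝 (x - Real.log (1+x))) ∧
    ∀ M : ℕ, |∑ m ∈ Finset.Icc 2 M, (-1:ℝ)^m * x^m / m| ≤ x^2 := by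
  set a : ℕ → ℝ := fun i => x^(i+2)/(i+2) with ha_def
  have ha_nonneg : ∀ i, 0 ≤ a i := fun i => by positivity
  have ha_le : ∀ i, a i ≤ a 0 := by
    intro i
    apply div_le_div₀ (by positivity) (pow_le_pow_of_le_one hx0.le hx1 (by omega))
      (by positivity) (by push_cast; linarith [Nat.cast_nonneg (α := ℝ) i])
  have ha : Antitone a := by
    apply antitone_nat_of_succ_le
    intro i
    apply div_le_div₀ (by positivity) (pow_le_pow_of_le_one hx0.le hx1 (by omega))
      (by positivity) (by push_cast; linarith)
  set S : ℕ → ℝ := fun n => ∑ i ∈ Finset.range n, (-1:ℝ)^i * a i with hS_def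
  have hl : Tendsto S atTop (𝓝 (x - Real.log (1+x))) := hid
  set l : ℝ := x - Real.log (1+x) with hl_def
  have hl0 : 0 ≤ l := by simpa using ha.alternating_series_le_tendsto hl 0
  have hla : l ≤ a 0 := by simpa using ha.tendsto_le_alternating_series hl 0
  have hSeven : ∀ k, S (2*k) ≤ l := fun k => ha.alternating_series_le_tendsto hl k
  have hSodd : ∀ k, l ≤ S (2*k+1) := fun k => ha.tendsto_le_alternating_series hl k
  have hstep : ∀ m, S (m+1) = S m + (-1:ℝ)^m * a m := fun m => Finset.sum_range_succ _ m
  have ha0x : a 0 = x^2/2 := by norm_num [ha_def]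
  have hSbound : ∀ n, |S n| ≤ x^2 := by
    intro n
    rw [abs_le]
    rcases Nat.even_or_odd n with ⟨k, hk⟩ | ⟨k, hk⟩
    · have hk' : n = 2*k := by omega
      subst hk'
      constructor
      · rcases Nat.eq_zero_or_pos k with rfl | hkpos
        · have : S (2*0) = 0 := by simp [hS_def]
          rw [this]; nlinarith
        · obtain ⟨k', rfl⟩ : ∃ k', k = k' + 1 := ⟨k-1, by omega⟩
          rw [show 2*(k'+1) = (2*k'+1)+1 from by omega, hstep (2*k'+1)]
          have hpow : (-1:ℝ)^(2*k'+1) = -1 := by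
            rw [pow_succ, pow_mul]; norm_num
          rw [hpow]
          nlinarith [hSodd k', ha_le (2*k'+1)]
      · nlinarith [hSeven k]
    · subst hk
      constructor
      · nlinarith [hSodd k]
      · rw [hstep (2*k)]
        have hpow : (-1:ℝ)^(2*k) = 1 := by rw [pow_mul]; norm_num
        rw [hpow]
        nlinarith [hSeven k, ha_le (2*k)]
  constructor
  · have h2 : Tendsto (fun M : ℕ => S (M-1)) atTop (𝓝 l) :=
      hl.comp (tendsto_sub_atTop_nat 1)
    exact h2.congr (fun M => (icc_sum_eq x M).symm)
  · intro M
    rw [icc_sum_eq]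
    exact hSbound (M-1)

lemma hid_lt (x : ℝ) (hx0 : 0 < x) (hx1 : x < 1) :
    Tendsto (fun n : ℕ => ∑ i ∈ Finset.range n, (-1:ℝ)^i * (x^(i+2)/(i+2))) atTop
      (𝓝 (x - Real.log (1+x))) := by
  have hs := Real.hasSum_pow_div_log_of_abs_lt_one (x := -x)
    (by rwa [abs_neg, abs_of_pos hx0])
  rw [sub_neg_eq_add] at hs
  have hts := hs.tendsto_sum_nat
  have hshift : Tendsto (fun n => ∑ i ∈ Finset.range (n+1), (-x)^(i+1)/((i:ℝ)+1))
      atTop (𝓝 (-Real.log (1+x))) := hts.comp (tendsto_add_atTop_nat 1)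
  have hterm : ∀ i : ℕ, (-x)^(i+1+1)/((↑(i+1):ℝ)+1) = (-1:ℝ)^i * (x^(i+2)/(i+2)) := by
    intro i
    have h2 : i+1+1 = i+2 := rfl
    rw [h2]
    have h3 : (-x)^(i+2) = (-1:ℝ)^i * x^(i+2) := by
      rw [show -x = (-1:ℝ) * x from by ring, mul_pow, pow_add]
      norm_num
    rw [h3]
    push_cast
    ring
  have heq : ∀ n : ℕ, ∑ i ∈ Finset.range n, (-1:ℝ)^i * (x^(i+2)/(i+2))
      = x + ∑ i ∈ Finset.range (n+1), (-x)^(i+1)/((i:ℝ)+1) := by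
    intro n
    rw [Finset.sum_range_succ' (fun i => (-x)^(i+1)/((i:ℝ)+1)) n]
    rw [Finset.sum_congr rfl (fun i _ => hterm i)]
    norm_num
  have := (tendsto_const_nhds (x := x)).add hshift
  rw [show x + -Real.log (1+x) = x - Real.log (1+x) from by ring] at this
  exact this.congr (fun n => (heq n).symm)

lemma harmonic_alt (k : ℕ) :
    ∑ i ∈ Finset.range (2*k), (-1:ℝ)^i * ((i:ℝ)+1)⁻¹
      = (harmonic (2*k) : ℝ) - (harmonic k : ℝ) := by
  induction k with
  | zero => simp
  | succ k ih =>
    have hstep : ∀ m : ℕ, ∑ i ∈ Finset.range (m+1), (-1:ℝ)^i * ((i:ℝ)+1)⁻¹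
        = (∑ i ∈ Finset.range m, (-1:ℝ)^i * ((i:ℝ)+1)⁻¹) + (-1:ℝ)^m * ((m:ℝ)+1)⁻¹ :=
      fun m => Finset.sum_range_succ _ m
    rw [show 2*(k+1) = (2*k+1)+1 from by omega, hstep (2*k+1), hstep (2*k), ih]
    rw [harmonic_succ (2*k+1), harmonic_succ (2*k), harmonic_succ k]
    have hp1 : (-1:ℝ)^(2*k) = 1 := by rw [pow_mul]; norm_num
    have hp2 : (-1:ℝ)^(2*k+1) = -1 := by rw [pow_succ, hp1]; norm_num
    rw [hp1, hp2]
    have h1 : ((2*k:ℝ)+1) ≠ 0 := by positivity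
    have h2 : ((2*k:ℝ)+1+1) ≠ 0 := by positivity
    have h3 : ((k:ℝ)+1) ≠ 0 := by positivity
    push_cast
    field_simp
    ring

lemma tendsto_alt_harmonic_even :
    Tendsto (fun k : ℕ => ∑ i ∈ Finset.range (2*k), (-1:ℝ)^i * ((i:ℝ)+1)⁻¹) atTop
      (𝓝 (Real.log 2)) := by
  have h2k : Tendsto (fun k : ℕ => 2*k) atTop atTop :=
    StrictMono.tendsto_atTop (fun a b hab => by omega)
  have hA := Real.tendsto_harmonic_sub_log
  have hcomp : Tendsto (fun k : ℕ => (harmonic (2*k) : ℝ) - Real.log (2*k)) atTop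
      (𝓝 Real.eulerMascheroniConstant) := by
    have := hA.comp h2k
    apply this.congr
    intro k
    simp only [Function.comp]
    push_cast
    ring_nf
  have hmain : Tendsto (fun k : ℕ =>
      ((harmonic (2*k) : ℝ) - Real.log (2*k)) - ((harmonic k : ℝ) - Real.log k) + Real.log 2)
      atTop (𝓝 (Real.log 2)) := by
    have := (hcomp.sub hA).add_const (Real.log 2)
    simpa using this
  apply hmain.congr'
  filter_upwards [eventually_ge_atTop 1] with k hk
  rw [harmonic_alt k]
  have hk0 : ((k:ℝ)) ≠ 0 := by positivity
  have : Real.log (2*(k:ℝ)) = Real.log 2 + Real.log k := Real.log_mul two_ne_zero hk0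
  push_cast
  rw [this]
  ring

lemma hid_one :
    Tendsto (fun n : ℕ => ∑ i ∈ Finset.range n, (-1:ℝ)^i * ((1:ℝ)^(i+2)/(i+2))) atTop
      (𝓝 (1 - Real.log (1+1))) := by
  have hfun : ∀ n : ℕ, ∑ i ∈ Finset.range n, (-1:ℝ)^i * ((1:ℝ)^(i+2)/(i+2))
      = ∑ i ∈ Finset.range n, (-1:ℝ)^i * ((i:ℝ)+2)⁻¹ := by
    intro n
    refine Finset.sum_congr rfl (fun i _ => ?_)
    rw [one_pow, one_div]
  set b : ℕ → ℝ := fun i => ((i:ℝ)+2)⁻¹ with hb_def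
  have hbanti : Antitone b := by
    apply antitone_nat_of_succ_le
    intro i
    apply inv_anti₀ (by positivity) (by push_cast; linarith)
  have hb0 : Tendsto b atTop (𝓝 0) :=
    tendsto_inv_atTop_zero.comp
      (tendsto_atTop_add_const_right atTop 2 tendsto_natCast_atTop_atTop)
  obtain ⟨l, hl⟩ := hbanti.tendsto_alternating_series_of_tendsto_zero hb0
  -- S n = 1 - A (n+1) where A m = ∑ i ∈ range m, (-1)^i * (i+1)⁻¹
  set A : ℕ → ℝ := fun m => ∑ i ∈ Finset.range m, (-1:ℝ)^i * ((i:ℝ)+1)⁻¹ with hA_def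
  set S : ℕ → ℝ := fun n => ∑ i ∈ Finset.range n, (-1:ℝ)^i * b i with hS_def
  have hSA : ∀ n : ℕ, S n = 1 - A (n+1) := by
    intro n
    have : A (n+1) = (∑ i ∈ Finset.range n, (-1:ℝ)^(i+1) * ((↑(i+1):ℝ)+1)⁻¹) + 1 := by
      have := Finset.sum_range_succ' (fun i => (-1:ℝ)^i * ((i:ℝ)+1)⁻¹) n
      simpa using this
    rw [this]
    have : ∀ i : ℕ, (-1:ℝ)^(i+1) * ((↑(i+1):ℝ)+1)⁻¹ = -((-1:ℝ)^i * b i) := by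
      intro i
      rw [hb_def, pow_succ]
      push_cast
      ring_nf
    rw [Finset.sum_congr rfl (fun i _ => this i), Finset.sum_neg_distrib]
    ring
  -- odd partial sums converge to 1 - log 2
  have hodd : Tendsto (fun k : ℕ => S (2*k+1)) atTop (𝓝 (1 - Real.log 2)) := by
    have h1 : Tendsto (fun k : ℕ => A (2*(k+1))) atTop (𝓝 (Real.log 2)) :=
      tendsto_alt_harmonic_even.comp (tendsto_add_atTop_nat 1)
    have := (tendsto_const_nhds (x := (1:ℝ))).sub h1
    apply this.congr
    intro k
    rw [hSA (2*k+1), show 2*k+1+1 = 2*(k+1) from by omega]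
  have hodd' : Tendsto (fun k : ℕ => S (2*k+1)) atTop (𝓝 l) :=
    hl.comp (StrictMono.tendsto_atTop (fun a b hab => by omega))
  have hleq : l = 1 - Real.log 2 := tendsto_nhds_unique hodd' hodd
  rw [show (1:ℝ)+1 = 2 from by norm_num]
  rw [← hleq]
  exact hl.congr (fun n => (hfun n).symm)

lemma fbound (x : ℝ) (hx0 : 0 < x) (hx1 : x ≤ 1) :
    0 ≤ x - Real.log (1+x) ∧ x - Real.log (1+x) ≤ x^2 := by
  have h1x : (0:ℝ) < 1 + x := by linarith
  constructor
  · have := Real.log_le_sub_one_of_pos h1x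
    linarith
  · have h2 := Real.log_le_sub_one_of_pos (inv_pos.mpr h1x)
    rw [Real.log_inv] at h2
    have hy1 : (1+x)⁻¹ ≤ 1 := by
      rw [inv_le_one_iff₀]; right; linarith
    have hxy : (1+x) * (1+x)⁻¹ = 1 := mul_inv_cancel₀ (ne_of_gt h1x)
    nlinarith [hx0.le]

end aux

/-- The Riemann zeta value `ζ(m) = ∑_{k=1}^∞ k^{−m}` as a real number. -/
noncomputable def zetaR (m : ℕ) : ℝ := ∑' k : ℕ+, ((k : ℝ) ^ m)⁻¹

/-- The normalizing sequence `C(n,p) = exp((1/p)·∑_{j=1}^n 1/j) · ∏_{j=1}^n (j·p/(j·p+1))`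
converges as `n → ∞` to the positive limit `exp(∑_{m=2}^∞ ((−1)^m/(m·p^m))·ζ(m))`,
where the series over `m` is understood as the limit of its partial sums. -/
theorem stmt5 (p : ℕ) (hp : 1 ≤ p) :
    ∃ S : ℝ,
      Tendsto (fun M : ℕ =>
          ∑ m ∈ Finset.Icc 2 M, ((-1 : ℝ) ^ m / ((m : ℝ) * (p : ℝ) ^ m)) * zetaR m)
        atTop (𝓝 S) ∧
      Tendsto (fun n : ℕ =>
          Real.exp ((1 / (p : ℝ)) * ∑ j ∈ Finset.Icc 1 n, (1 : ℝ) / (j : ℝ)) *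
            ∏ j ∈ Finset.Icc 1 n, ((j : ℝ) * (p : ℝ) / ((j : ℝ) * (p : ℝ) + 1)))
        atTop (𝓝 (Real.exp S)) ∧
      0 < Real.exp S := by
  have hp0 : (0:ℝ) < p := by exact_mod_cast hp
  have hp1 : (1:ℝ) ≤ p := by exact_mod_cast hp
  -- the sequence x over positive naturals
  set x : ℕ+ → ℝ := fun k => ((k:ℝ) * p)⁻¹ with hx_def
  have hk1 : ∀ k : ℕ+, (1:ℝ) ≤ (k:ℝ) := by
    intro k; exact_mod_cast k.one_le
  have hkp1 : ∀ k : ℕ+, (1:ℝ) ≤ (k:ℝ) * p := fun k => by nlinarith [hk1 k]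
  have hx0 : ∀ k, 0 < x k := fun k => inv_pos.mpr (by linarith [hkp1 k])
  have hx1 : ∀ k, x k ≤ 1 := fun k => inv_le_one_of_one_le₀ (hkp1 k)
  set f : ℕ+ → ℝ := fun k => x k - Real.log (1 + x k) with hf_def
  -- pointwise limit identification
  have hid : ∀ k : ℕ+, Tendsto (fun n : ℕ =>
      ∑ i ∈ Finset.range n, (-1:ℝ)^i * ((x k)^(i+2)/(i+2))) atTop
      (𝓝 (x k - Real.log (1 + x k))) := by
    intro k
    rcases lt_or_eq_of_le (hx1 k) with h | h
    · exact hid_lt (x k) (hx0 k) h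
    · rw [h]; exact hid_one
  have hkey := fun k : ℕ+ => key_tendsto_and_bound (x k) (hx0 k) (hx1 k) (hid k)
  -- bounds on f
  have hfb := fun k : ℕ+ => fbound (x k) (hx0 k) (hx1 k)
  have hxsq : ∀ k : ℕ+, (x k)^2 ≤ ((k:ℝ)^2)⁻¹ := by
    intro k
    have h1 : x k ≤ (k:ℝ)⁻¹ := by
      apply inv_anti₀ (by linarith [hk1 k])
      nlinarith [hk1 k]
    calc (x k)^2 ≤ ((k:ℝ)⁻¹)^2 := by
          apply pow_le_pow_left₀ (hx0 k).le h1
      _ = ((k:ℝ)^2)⁻¹ := by rw [inv_pow]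
  -- summability of the bound
  have hbound_sum : Summable (fun k : ℕ+ => ((k:ℝ)^2)⁻¹) := by
    have h := (Real.summable_nat_pow_inv (p := 2)).mpr one_lt_two
    have := h.comp_injective (i := fun k : ℕ+ => (k:ℕ)) (fun a b hab => PNat.coe_injective hab)
    exact this.congr (fun k => by simp [Function.comp])
  have hf_sum : Summable f :=
    Summable.of_nonneg_of_le (fun k => (hfb k).1)
      (fun k => le_trans (hfb k).2 (hxsq k)) hbound_sum
  refine ⟨∑' k : ℕ+, f k, ?_, ?_, Real.exp_pos _⟩
  · -- the m-series side
    have hz_sum : ∀ m : ℕ, 2 ≤ m → Summable (fun k : ℕ+ => ((k:ℝ)^m)⁻¹) := by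
      intro m hm
      apply Summable.of_nonneg_of_le (fun k => by positivity) _ hbound_sum
      intro k
      apply inv_anti₀ (by positivity)
      exact pow_le_pow_right₀ (hk1 k) hm
    have hswap : ∀ M : ℕ,
        ∑ m ∈ Finset.Icc 2 M, ((-1:ℝ)^m / ((m:ℝ) * (p:ℝ)^m)) * zetaR m
          = ∑' k : ℕ+, ∑ m ∈ Finset.Icc 2 M, ((-1:ℝ)^m / ((m:ℝ) * (p:ℝ)^m)) * ((k:ℝ)^m)⁻¹ := by
      intro M
      rw [Summable.tsum_finsetSum (fun m hm => ((hz_sum m (Finset.mem_Icc.mp hm).1).mul_left _))]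
      refine Finset.sum_congr rfl (fun m _ => ?_)
      rw [tsum_mul_left]
      rfl
    have hterm_eq : ∀ (k : ℕ+) (m : ℕ),
        ((-1:ℝ)^m / ((m:ℝ) * (p:ℝ)^m)) * ((k:ℝ)^m)⁻¹ = (-1:ℝ)^m * (x k)^m / m := by
      intro k m
      rw [hx_def]
      rw [show (((k:ℝ) * p)⁻¹)^m = ((k:ℝ)^m)⁻¹ * ((p:ℝ)^m)⁻¹ from by
        rw [mul_inv, mul_pow, inv_pow, inv_pow]]
      field_simp
    have hdct := tendsto_tsum_of_dominated_convergence (𝓕 := (atTop : Filter ℕ))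
      (f := fun M (k : ℕ+) => ∑ m ∈ Finset.Icc 2 M, ((-1:ℝ)^m / ((m:ℝ) * (p:ℝ)^m)) * ((k:ℝ)^m)⁻¹)
      (g := f) (bound := fun k : ℕ+ => ((k:ℝ)^2)⁻¹) hbound_sum
      (fun k => by
        have := (hkey k).1
        apply this.congr
        intro M
        exact (Finset.sum_congr rfl (fun m _ => (hterm_eq k m).symm)))
      (Eventually.of_forall (fun M k => by
        rw [Real.norm_eq_abs, Finset.sum_congr rfl (fun m _ => hterm_eq k m)]
        exact le_trans ((hkey k).2 M) (hxsq k)))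
    exact hdct.congr (fun M => (hswap M).symm)
  · -- the product side
    set F : ℕ → ℝ := fun j => ((j:ℝ) * p)⁻¹ - Real.log (1 + ((j:ℝ)*p)⁻¹) with hF_def
    have hF0 : F 0 = 0 := by simp [hF_def]
    have hFpnat : ∀ k : ℕ+, F (k:ℕ) = f k := by
      intro k; rfl
    have hF_sum : Summable F := by
      apply Summable.of_nonneg_of_le (f := fun j : ℕ => ((j:ℝ)^2)⁻¹) _ _
        ((Real.summable_nat_pow_inv (p := 2)).mpr one_lt_two)
      · intro j
        rcases Nat.eq_zero_or_pos j with rfl | hj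
        · rw [hF0]
        · have hj1 : (1:ℝ) ≤ (j:ℝ) := by exact_mod_cast hj
          have hjp : (0:ℝ) < (j:ℝ)*p := by nlinarith
          have hjp1 : (1:ℝ) ≤ (j:ℝ)*p := by nlinarith
          exact (fbound _ (inv_pos.mpr hjp) (inv_le_one_of_one_le₀ hjp1)).1
      · intro j
        rcases Nat.eq_zero_or_pos j with rfl | hj
        · rw [hF0]; norm_num
        · have hj1 : (1:ℝ) ≤ (j:ℝ) := by exact_mod_cast hj
          have hjp : (0:ℝ) < (j:ℝ)*p := by nlinarith
          have hjp1 : (1:ℝ) ≤ (j:ℝ)*p := by nlinarith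
          refine le_trans (fbound _ (inv_pos.mpr hjp) (inv_le_one_of_one_le₀ hjp1)).2 ?_
          calc (((j:ℝ)*p)⁻¹)^2 ≤ ((j:ℝ)⁻¹)^2 := by
                apply pow_le_pow_left₀ (by positivity)
                apply inv_anti₀ (by linarith)
                nlinarith
            _ = ((j:ℝ)^2)⁻¹ := by rw [inv_pow]
    -- tsum over ℕ equals tsum over ℕ+
    have htsum_eq : ∑' j : ℕ, F j = ∑' k : ℕ+, f k := by
      rw [Summable.tsum_eq_zero_add hF_sum, hF0, zero_add]
      rw [← Equiv.tsum_eq (Equiv.pnatEquivNat.symm) f]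
      refine tsum_congr (fun n => ?_)
      have h : ((Equiv.pnatEquivNat.symm n : ℕ+) : ℕ) = n + 1 := by
        simp [Equiv.pnatEquivNat]
      rw [← hFpnat (Equiv.pnatEquivNat.symm n), h]
    -- partial sums over Icc 1 n equal range (n+1) sums
    have hIcc : ∀ n : ℕ, ∑ j ∈ Finset.Icc 1 n, F j = ∑ j ∈ Finset.range (n+1), F j := by
      intro n
      induction n with
      | zero => simp [hF0]
      | succ n ih =>
        rw [Finset.sum_Icc_succ_top (by omega), ih, Finset.sum_range_succ (f := F) (n := n+1)]
    have htend : Tendsto (fun n : ℕ => ∑ j ∈ Finset.Icc 1 n, F j) atTop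
        (𝓝 (∑' k : ℕ+, f k)) := by
      rw [← htsum_eq]
      have := hF_sum.hasSum.tendsto_sum_nat.comp (tendsto_add_atTop_nat 1)
      exact this.congr (fun n => (hIcc n).symm)
    -- product identity
    have hprod : ∀ n : ℕ,
        Real.exp ((1 / (p:ℝ)) * ∑ j ∈ Finset.Icc 1 n, (1:ℝ)/(j:ℝ)) *
          ∏ j ∈ Finset.Icc 1 n, ((j:ℝ) * p / ((j:ℝ) * p + 1))
        = Real.exp (∑ j ∈ Finset.Icc 1 n, F j) := by
      intro n
      have hpos : ∀ j ∈ Finset.Icc 1 n, (0:ℝ) < (j:ℝ) * p / ((j:ℝ) * p + 1) := by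
        intro j hj
        have hj1 : 1 ≤ j := (Finset.mem_Icc.mp hj).1
        have : (1:ℝ) ≤ (j:ℝ) := by exact_mod_cast hj1
        positivity
      rw [show ∏ j ∈ Finset.Icc 1 n, ((j:ℝ) * p / ((j:ℝ) * p + 1))
          = ∏ j ∈ Finset.Icc 1 n, Real.exp (Real.log ((j:ℝ) * p / ((j:ℝ) * p + 1))) from
        (Finset.prod_congr rfl (fun j hj => (Real.exp_log (hpos j hj)).symm)),
        ← Real.exp_sum, ← Real.exp_add]
      congr 1
      rw [Finset.mul_sum, ← Finset.sum_add_distrib]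
      refine Finset.sum_congr rfl (fun j hj => ?_)
      have hj1 : 1 ≤ j := (Finset.mem_Icc.mp hj).1
      have hjr : (1:ℝ) ≤ (j:ℝ) := by exact_mod_cast hj1
      have hjp : (0:ℝ) < (j:ℝ) * p := by nlinarith
      have hlog : Real.log ((j:ℝ) * p / ((j:ℝ) * p + 1)) = -Real.log (1 + ((j:ℝ)*p)⁻¹) := by
        rw [show (j:ℝ) * p / ((j:ℝ) * p + 1) = (1 + ((j:ℝ)*p)⁻¹)⁻¹ from by
          field_simp, Real.log_inv]
      rw [hlog, hF_def]
      have : (1:ℝ)/(p:ℝ) * ((1:ℝ)/(j:ℝ)) = ((j:ℝ)*p)⁻¹ := by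
        field_simp
      rw [this]
      ring
    have hexp := (Real.continuous_exp.tendsto _).comp htend
    exact (hexp.congr (fun n => (hprod n).symm))
end

section
/- Let N = [α, β] be a compact interval with α < β, let k₀ ∈ N, and let r : N → ℝ be continuous with 0 ≤ r(k) ≤ 1 for all k, r(k₀) = 1, and r(k) < 1 for every k ≠ k₀. Then for every continuous function f : N → ℂ, the quotient ( ∫_N r(k)^n f(k) dk ) / ( ∫_N r(k)^n dk ) converges to f(k₀) as n → ∞ (the denominator being strictly positive for every n). -/
open MeasureTheory Filter Topology

/-- Concentration of normalized powers: if `r` is continuous on `[α,β]` with `0 ≤ r ≤ 1`,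
`r(k₀) = 1` and `r(k) < 1` for `k ≠ k₀`, then for every continuous `f : [α,β] → ℂ`,
`(∫_α^β r(k)^n f(k) dk) / (∫_α^β r(k)^n dk) → f(k₀)` as `n → ∞`, the denominator being
strictly positive for every `n`. -/
theorem stmt7 (α β : ℝ) (hαβ : α < β) (k₀ : ℝ) (hk₀ : k₀ ∈ Set.Icc α β)
    (r : ℝ → ℝ) (hr : ContinuousOn r (Set.Icc α β))
    (hr0 : ∀ k ∈ Set.Icc α β, 0 ≤ r k) (hr1 : ∀ k ∈ Set.Icc α β, r k ≤ 1)
    (hmax : r k₀ = 1) (hlt : ∀ k ∈ Set.Icc α β, k ≠ k₀ → r k < 1)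
    (f : ℝ → ℂ) (hf : ContinuousOn f (Set.Icc α β)) :
    (∀ n : ℕ, 0 < ∫ k in α..β, r k ^ n) ∧
    Tendsto (fun n : ℕ =>
        (∫ k in α..β, ((r k : ℂ)) ^ n * f k) / (((∫ k in α..β, r k ^ n : ℝ)) : ℂ))
      atTop (𝓝 (f k₀)) := by
  have hab : α ≤ β := hαβ.le
  have huicc : Set.uIcc α β = Set.Icc α β := Set.uIcc_of_le hab
  have hrn : ∀ n : ℕ, ContinuousOn (fun k => r k ^ n) (Set.Icc α β) := fun n => hr.pow n
  have hrint : ∀ n : ℕ, IntervalIntegrable (fun k => r k ^ n) volume α β := by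
    intro n
    exact (huicc ▸ hrn n).intervalIntegrable
  -- key lower bound
  have key : ∀ m : ℝ, 0 ≤ m → m < 1 → ∃ η : ℝ, 0 < η ∧
      ∀ n : ℕ, η * m ^ n ≤ ∫ k in α..β, r k ^ n := by
    intro m hm0 hm1
    have hc : ContinuousWithinAt r (Set.Icc α β) k₀ := hr k₀ hk₀
    rw [Metric.continuousWithinAt_iff] at hc
    obtain ⟨δ, hδ, hball⟩ := hc (1 - m) (by linarith)
    set c := max α (k₀ - δ/2) with hc_def
    set d := min β (k₀ + δ/2) with hd_def
    have hαc : α ≤ c := le_max_left _ _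
    have hdβ : d ≤ β := min_le_left _ _
    have hcd : c < d := by
      apply max_lt_iff.mpr
      constructor
      · apply lt_min hαβ (by nlinarith [hk₀.1])
      · apply lt_min (by nlinarith [hk₀.2]) (by linarith)
    have hmem : ∀ k ∈ Set.Icc c d, m ≤ r k := by
      intro k hk
      have hkN : k ∈ Set.Icc α β := ⟨hαc.trans hk.1, hk.2.trans hdβ⟩
      have hdist : dist k k₀ < δ := by
        rw [Real.dist_eq, abs_lt]
        constructor
        · have := hk.1; have : max α (k₀ - δ/2) ≤ k := hk.1; linarith [le_trans (le_max_right α (k₀ - δ/2)) this]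
        · have : k ≤ min β (k₀ + δ/2) := hk.2; linarith [le_trans this (min_le_right β (k₀ + δ/2))]
      have := hball hkN hdist
      rw [hmax, Real.dist_eq, abs_lt] at this
      linarith [this.1]
    refine ⟨d - c, by linarith, fun n => ?_⟩
    have h1 : (d - c) * m ^ n = ∫ _ in c..d, m ^ n := by
      rw [intervalIntegral.integral_const, smul_eq_mul]
    rw [h1]
    have hint_cd : IntervalIntegrable (fun k => r k ^ n) volume c d := by
      apply (hrint n).mono_set
      rw [huicc, Set.uIcc_of_le hcd.le]
      exact Set.Icc_subset_Icc hαc hdβ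
    calc (∫ _ in c..d, m ^ n) ≤ ∫ k in c..d, r k ^ n := by
          apply intervalIntegral.integral_mono_on hcd.le intervalIntegrable_const hint_cd
          intro x hx
          exact pow_le_pow_left₀ hm0 (hmem x hx) n
      _ ≤ ∫ k in α..β, r k ^ n := by
          apply intervalIntegral.integral_mono_interval hαc hcd.le hdβ _ (hrint n)
          filter_upwards [ae_restrict_mem measurableSet_Ioc] with x hx
          exact pow_nonneg (hr0 x ⟨hx.1.le, hx.2⟩) n
  have hpos : ∀ n : ℕ, 0 < ∫ k in α..β, r k ^ n := by
    intro n
    obtain ⟨η, hη, hle⟩ := key (1/2) (by norm_num) (by norm_num)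
    calc (0:ℝ) < η * (1/2)^n := by positivity
      _ ≤ _ := hle n
  refine ⟨hpos, ?_⟩
  -- bound on f - f k₀
  obtain ⟨C, hC⟩ := (isCompact_Icc (a := α) (b := β)).exists_bound_of_continuousOn
    ((hf.sub continuousOn_const : ContinuousOn (fun k => f k - f k₀) _))
  have hC0 : 0 ≤ C := le_trans (norm_nonneg _) (hC k₀ hk₀)
  rw [Metric.tendsto_atTop]
  intro ε hε
  -- continuity of f at k₀
  have hfc : ContinuousWithinAt f (Set.Icc α β) k₀ := hf k₀ hk₀
  rw [Metric.continuousWithinAt_iff] at hfc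
  obtain ⟨δ, hδ, hball⟩ := hfc (ε/4) (by linarith)
  -- sup of r away from k₀
  obtain ⟨ρ, hρ0, hρ1, hρ⟩ : ∃ ρ : ℝ, 0 ≤ ρ ∧ ρ < 1 ∧
      ∀ k ∈ Set.Icc α β, δ ≤ dist k k₀ → r k ≤ ρ := by
    set S := Set.Icc α β ∩ {k | δ ≤ dist k k₀} with hS
    have hScpt : IsCompact S := (isCompact_Icc).inter_right
      (isClosed_le continuous_const (continuous_id.dist continuous_const))
    rcases S.eq_empty_or_nonempty with hemp | hne
    · refine ⟨0, le_refl _, by norm_num, fun k hk hd => ?_⟩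
      exfalso
      have hmem : k ∈ S := ⟨hk, hd⟩
      rw [hemp] at hmem
      exact hmem
    · obtain ⟨x, hxS, hx⟩ := hScpt.exists_isMaxOn hne (hr.mono Set.inter_subset_left)
      refine ⟨r x, hr0 x hxS.1, ?_, fun k hk hd => hx ⟨hk, hd⟩⟩
      apply hlt x hxS.1
      intro h
      rw [h] at hxS
      have := hxS.2
      simp only [Set.mem_setOf_eq, dist_self] at this
      linarith
  set m := (ρ + 1) / 2 with hm_def
  have hρm : ρ < m := by rw [hm_def]; linarith
  have hm0 : 0 ≤ m := by rw [hm_def]; linarith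
  have hm1 : m < 1 := by rw [hm_def]; linarith
  obtain ⟨η, hη, hkey⟩ := key m hm0 hm1
  -- pointwise bound
  have hpt : ∀ n : ℕ, ∀ k ∈ Set.Icc α β,
      ‖((r k : ℂ)) ^ n * (f k - f k₀)‖ ≤ (ε/4) * r k ^ n + C * ρ ^ n := by
    intro n k hk
    have hnorm : ‖((r k : ℂ)) ^ n * (f k - f k₀)‖ = r k ^ n * ‖f k - f k₀‖ := by
      rw [norm_mul, norm_pow, Complex.norm_real, Real.norm_eq_abs, abs_of_nonneg (hr0 k hk)]
    rw [hnorm]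
    by_cases hd : dist k k₀ < δ
    · have h1 : ‖f k - f k₀‖ ≤ ε/4 := by
        have := hball hk hd
        rw [dist_eq_norm] at this
        linarith
      calc r k ^ n * ‖f k - f k₀‖ ≤ r k ^ n * (ε/4) := by
            apply mul_le_mul_of_nonneg_left h1 (pow_nonneg (hr0 k hk) n)
        _ ≤ (ε/4) * r k ^ n + C * ρ ^ n := by
            rw [mul_comm]; nlinarith [pow_nonneg hρ0 n]
    · push_neg at hd
      have h1 : r k ^ n ≤ ρ ^ n := pow_le_pow_left₀ (hr0 k hk) (hρ k hk hd) n
      calc r k ^ n * ‖f k - f k₀‖ ≤ ρ ^ n * C := by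
            apply mul_le_mul h1 (hC k hk) (norm_nonneg _) (pow_nonneg hρ0 n)
        _ ≤ (ε/4) * r k ^ n + C * ρ ^ n := by
            rw [mul_comm]
            nlinarith [pow_nonneg (hr0 k hk) n]
  -- integral identity
  have hfint : ∀ n : ℕ, IntervalIntegrable (fun k => ((r k : ℂ)) ^ n * f k) volume α β := by
    intro n
    apply ContinuousOn.intervalIntegrable
    rw [huicc]
    exact (((Complex.continuous_ofReal.comp_continuousOn hr).pow n).mul hf)
  have hgint : ∀ n : ℕ, IntervalIntegrable (fun k => ((r k : ℂ)) ^ n * (f k - f k₀)) volume α β := by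
    intro n
    apply ContinuousOn.intervalIntegrable
    rw [huicc]
    exact (((Complex.continuous_ofReal.comp_continuousOn hr).pow n).mul (hf.sub continuousOn_const))
  have hiden : ∀ n : ℕ,
      (∫ k in α..β, ((r k : ℂ)) ^ n * f k) - ((∫ k in α..β, r k ^ n : ℝ) : ℂ) * f k₀
        = ∫ k in α..β, ((r k : ℂ)) ^ n * (f k - f k₀) := by
    intro n
    have hcast : ((∫ k in α..β, r k ^ n : ℝ) : ℂ) = ∫ k in α..β, ((r k : ℂ)) ^ n := by
      rw [← intervalIntegral.integral_ofReal]
      push_cast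
      rfl
    have hcint : IntervalIntegrable (fun k => ((r k : ℂ)) ^ n * f k₀) volume α β := by
      apply ContinuousOn.intervalIntegrable
      rw [huicc]
      exact (((Complex.continuous_ofReal.comp_continuousOn hr).pow n).mul continuousOn_const)
    rw [hcast, ← intervalIntegral.integral_mul_const, ← intervalIntegral.integral_sub (hfint n) hcint]
    congr 1
    ext k
    ring
  -- main estimate: for all n, ‖u n - f k₀‖ ≤ ε/4 + (C*(β-α)/η) * (ρ/m)^n
  have hmain : ∀ n : ℕ, dist ((∫ k in α..β, ((r k : ℂ)) ^ n * f k) / ((∫ k in α..β, r k ^ n : ℝ) : ℂ))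
      (f k₀) ≤ ε/4 + (C*(β-α)/η) * (ρ/m)^n := by
    intro n
    set I := (∫ k in α..β, r k ^ n : ℝ) with hI
    have hIpos : 0 < I := hpos n
    have hIC : (I : ℂ) ≠ 0 := by exact_mod_cast hIpos.ne'
    rw [dist_eq_norm, div_sub' hIC]
    rw [norm_div]
    have hInorm : ‖(I : ℂ)‖ = I := by
      rw [Complex.norm_real, Real.norm_eq_abs, abs_of_pos hIpos]
    rw [hInorm]
    rw [div_le_iff₀ hIpos]
    have h2 : ‖(∫ k in α..β, ((r k : ℂ)) ^ n * f k) - (I : ℂ) * f k₀‖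
        ≤ (ε/4) * I + C * ρ ^ n * (β - α) := by
      have h2' := hiden n
      rw [← hI] at h2'
      rw [h2']
      have hb : ∀ᵐ t ∂(volume.restrict (Set.uIoc α β)),
          ‖((r t : ℂ)) ^ n * (f t - f k₀)‖ ≤ (ε/4) * r t ^ n + C * ρ ^ n := by
        rw [Set.uIoc_of_le hab]
        filter_upwards [ae_restrict_mem measurableSet_Ioc] with x hx
        exact hpt n x ⟨hx.1.le, hx.2⟩
      have hbi : IntervalIntegrable (fun t => (ε/4) * r t ^ n + C * ρ ^ n) volume α β :=
        (((hrint n).const_mul _).add intervalIntegrable_const)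
      calc ‖∫ k in α..β, ((r k : ℂ)) ^ n * (f k - f k₀)‖
          ≤ |∫ t in α..β, ((ε/4) * r t ^ n + C * ρ ^ n)| :=
            (intervalIntegral.norm_integral_le_of_norm_le hab
              (Filter.Eventually.of_forall (fun t ht => hpt n t ⟨ht.1.le, ht.2⟩)) hbi).trans (le_abs_self _)
        _ = |(ε/4) * I + C * ρ ^ n * (β - α)| := by
            rw [intervalIntegral.integral_add ((hrint n).const_mul _) intervalIntegrable_const,
              intervalIntegral.integral_const_mul, intervalIntegral.integral_const, smul_eq_mul,
              mul_comm (β - α)]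
        _ = (ε/4) * I + C * ρ ^ n * (β - α) := by
            rw [abs_of_nonneg]
            have h0 : 0 ≤ (ε/4) * I := mul_nonneg (by linarith) hIpos.le
            have h1 : 0 ≤ C * ρ ^ n * (β - α) :=
              mul_nonneg (mul_nonneg hC0 (pow_nonneg hρ0 n)) (by linarith)
            linarith
    refine h2.trans ?_
    have h3 : C * ρ ^ n * (β - α) ≤ (C*(β-α)/η) * (ρ/m)^n * I := by
      have h4 : η * m ^ n ≤ I := hkey n
      have hmn : (0:ℝ) < m ^ n := pow_pos (by linarith) n
      have heq : (C*(β-α)/η) * (ρ/m)^n * (η * m^n) = C * ρ^n * (β-α) := by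
        field_simp [ne_of_gt (by linarith : (0:ℝ) < m)]
        have hmi : m ^ n * m⁻¹ ^ n = 1 := by
          rw [← mul_pow, mul_inv_cancel₀ (ne_of_gt (by linarith : (0:ℝ) < m)), one_pow]
        linear_combination (C * β * ρ ^ n - C * α * ρ ^ n) * hmi
      calc C * ρ^n * (β-α) = (C*(β-α)/η) * (ρ/m)^n * (η * m^n) := heq.symm
        _ ≤ (C*(β-α)/η) * (ρ/m)^n * I := by
            exact mul_le_mul_of_nonneg_left h4
              (mul_nonneg (div_nonneg (mul_nonneg hC0 (by linarith)) hη.le)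
                (pow_nonneg (div_nonneg hρ0 hm0) n))
    nlinarith [h3]
  -- conclude
  have htend : Tendsto (fun n : ℕ => (C*(β-α)/η) * (ρ/m)^n) atTop (𝓝 0) := by
    rw [show (0:ℝ) = (C*(β-α)/η) * 0 by ring]
    apply Tendsto.const_mul
    apply tendsto_pow_atTop_nhds_zero_of_lt_one (div_nonneg hρ0 hm0)
    rw [div_lt_one (by linarith)]
    exact hρm
  have hev : ∀ᶠ n in atTop, (C*(β-α)/η) * (ρ/m)^n < ε/2 :=
    htend.eventually (gt_mem_nhds (by linarith))
  obtain ⟨N₀, hN₀⟩ := hev.exists_forall_of_atTop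
  refine ⟨N₀, fun n hn => ?_⟩
  calc dist _ _ ≤ ε/4 + (C*(β-α)/η) * (ρ/m)^n := hmain n
    _ < ε/4 + ε/2 := by linarith [hN₀ n hn]
    _ < ε := by linarith
end

section
/- Let H be a complex Hilbert space and let A : H → H be a compact, self-adjoint, positive-semidefinite bounded linear operator with ‖A‖ > 0. Let μ = ‖A‖, let P be the orthogonal projection onto the eigenspace ker(A − μ·I), and let U, Ψ ∈ H satisfy ⟨P U, Ψ⟩ ≠ 0. Then ⟨AⁿU, Ψ⟩ ≠ 0 for all sufficiently large n, and the normalized iterates AⁿU / ⟨AⁿU, Ψ⟩ converge in norm to P U / ⟨P U, Ψ⟩ as n → ∞. -/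
open Filter Topology

lemma aux_gap {H : Type*} [NormedAddCommGroup H] [InnerProductSpace ℂ H] [CompleteSpace H]
    (A : H →L[ℂ] H) (hsa : IsSelfAdjoint A) (hcp : IsCompactOperator A)
    (hpos : ∀ x : H, 0 ≤ (inner ℂ (A x) x : ℂ).re) (hA : 0 < ‖A‖) :
    ∃ ν : ℝ, 0 ≤ ν ∧ ν < ‖A‖ ∧
      (∀ x ∈ (Module.End.eigenspace (A : H →ₗ[ℂ] H) ((‖A‖ : ℂ)))ᗮ, A x ∈
        (Module.End.eigenspace (A : H →ₗ[ℂ] H) ((‖A‖ : ℂ)))ᗮ) ∧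
      ∀ x ∈ (Module.End.eigenspace (A : H →ₗ[ℂ] H) ((‖A‖ : ℂ)))ᗮ, ‖A x‖ ≤ ν * ‖x‖ := by
  set μ := ‖A‖ with hμ
  set E := Module.End.eigenspace (A : H →ₗ[ℂ] H) ((μ : ℂ)) with hE
  set F := Eᗮ with hF
  set S : Set ℝ := {r | ∃ x, x ∈ F ∧ ‖x‖ ≤ 1 ∧ r = (inner ℂ (A x) x : ℂ).re} with hS
  have hSne : S.Nonempty := ⟨0, 0, F.zero_mem, by simp, by simp⟩
  have hSbdd : BddAbove S := by
    refine ⟨μ, fun r hr => ?_⟩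
    obtain ⟨x, -, hx1, rfl⟩ := hr
    calc (inner ℂ (A x) x : ℂ).re ≤ ‖(inner ℂ (A x) x : ℂ)‖ := Complex.re_le_norm _
      _ ≤ ‖A x‖ * ‖x‖ := norm_inner_le_norm _ _
      _ ≤ (‖A‖ * ‖x‖) * ‖x‖ := by gcongr; exact A.le_opNorm x
      _ ≤ (‖A‖ * 1) * 1 := by gcongr
      _ = μ := by simp [hμ]
  set ν := sSup S with hν
  have hν0 : 0 ≤ ν := le_csSup hSbdd ⟨0, F.zero_mem, by simp, by simp⟩
  have hνμ : ν ≤ μ := csSup_le hSne (fun r hr => by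
    obtain ⟨x, -, hx1, rfl⟩ := hr
    calc (inner ℂ (A x) x : ℂ).re ≤ ‖(inner ℂ (A x) x : ℂ)‖ := Complex.re_le_norm _
      _ ≤ ‖A x‖ * ‖x‖ := norm_inner_le_norm _ _
      _ ≤ (‖A‖ * ‖x‖) * ‖x‖ := by gcongr; exact A.le_opNorm x
      _ ≤ (‖A‖ * 1) * 1 := by gcongr
      _ = μ := by simp [hμ])
  -- Rayleigh bound on F
  have hray : ∀ x ∈ F, (inner ℂ (A x) x : ℂ).re ≤ ν * ‖x‖ ^ 2 := by
    intro x hx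
    rcases eq_or_ne x 0 with rfl | hx0
    · simp
    · have hn : (0:ℝ) < ‖x‖ := norm_pos_iff.mpr hx0
      set y := ((‖x‖ : ℂ))⁻¹ • x with hy
      have hyF : y ∈ F := F.smul_mem _ hx
      have hyn : ‖y‖ = 1 := by
        rw [hy, norm_smul]; simp [norm_inv, hn.ne']
      have hinC : (inner ℂ (A y) y : ℂ) = (((‖x‖ ^ 2)⁻¹ : ℝ) : ℂ) * inner ℂ (A x) x := by
        rw [hy, map_smul, inner_smul_left, inner_smul_right, map_inv₀, Complex.conj_ofReal]
        push_cast
        ring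
      have hin : (inner ℂ (A y) y : ℂ).re = (‖x‖ ^ 2)⁻¹ * (inner ℂ (A x) x : ℂ).re := by
        rw [hinC, Complex.re_ofReal_mul]
      have hmem : (inner ℂ (A y) y : ℂ).re ≤ ν := le_csSup hSbdd ⟨y, hyF, hyn.le, rfl⟩
      rw [hin] at hmem
      have := mul_le_mul_of_nonneg_left hmem (le_of_lt (pow_pos hn 2))
      calc (inner ℂ (A x) x : ℂ).re = ‖x‖^2 * ((‖x‖ ^ 2)⁻¹ * (inner ℂ (A x) x : ℂ).re) := by
            field_simp
        _ ≤ ‖x‖^2 * ν := this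
        _ = ν * ‖x‖^2 := by ring
  have hsym := hsa.isSymmetric
  -- invariance of F under A
  have hAF : ∀ x ∈ F, A x ∈ F := by
    intro x hx
    rw [hF, Submodule.mem_orthogonal]
    intro e he
    have hAe : (A : H →ₗ[ℂ] H) e = ((μ : ℂ)) • e := (Module.End.mem_eigenspace_iff).mp he
    have hex : (inner ℂ e x : ℂ) = 0 := (Submodule.mem_orthogonal _ _).mp hx e he
    calc (inner ℂ e (A x) : ℂ) = inner ℂ ((A : H →ₗ[ℂ] H) e) x := (hsym e x).symm
      _ = inner ℂ (((μ : ℂ)) • e) x := by rw [hAe]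
      _ = (starRingEnd ℂ) ((μ : ℂ)) * inner ℂ e x := inner_smul_left _ _ _
      _ = 0 := by rw [hex, mul_zero]
  -- operator norm bound on F
  have hnorm : ∀ x ∈ F, ‖A x‖ ≤ ν * ‖x‖ := by
    intro x hx
    rcases eq_or_ne (A x) 0 with h0 | h0
    · rw [h0, norm_zero]; positivity
    have hyF : A x ∈ F := hAF x hx
    have hkey : ∀ t : ℝ, 0 ≤ (inner ℂ (A (A x)) (A x) : ℂ).re * (t * t) + (2 * ‖A x‖ ^ 2) * t
        + (inner ℂ (A x) x : ℂ).re := by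
      intro t
      have h0' := hpos (x + (t : ℂ) • A x)
      have h1 : (inner ℂ (A x) (A x) : ℂ) = (((‖A x‖ ^ 2 : ℝ)) : ℂ) := by
        rw [inner_self_eq_norm_sq_to_K]; norm_cast
      have h2 : (inner ℂ (A (A x)) x : ℂ) = (((‖A x‖ ^ 2 : ℝ)) : ℂ) := by
        calc (inner ℂ (A (A x)) x : ℂ) = inner ℂ ((A : H →ₗ[ℂ] H) (A x)) x := rfl
          _ = inner ℂ (A x) ((A : H →ₗ[ℂ] H) x) := hsym (A x) x
          _ = (((‖A x‖ ^ 2 : ℝ)) : ℂ) := h1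
      have hexp : (inner ℂ (A (x + (t : ℂ) • A x)) (x + (t : ℂ) • A x) : ℂ).re
          = (inner ℂ (A (A x)) (A x) : ℂ).re * (t * t) + (2 * ‖A x‖ ^ 2) * t
            + (inner ℂ (A x) x : ℂ).re := by
        rw [map_add, map_smul, inner_add_left, inner_add_right, inner_add_right,
          inner_smul_left, inner_smul_right, inner_smul_left, inner_smul_right,
          Complex.conj_ofReal, h1, h2]
        simp only [Complex.add_re, Complex.mul_re, Complex.ofReal_re, Complex.ofReal_im]
        ring
      rw [← hexp]
      exact h0'
    have hdisc := discrim_le_zero hkey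
    rw [discrim] at hdisc
    have ha : (inner ℂ (A (A x)) (A x) : ℂ).re ≤ ν * ‖A x‖ ^ 2 := hray (A x) hyF
    have hc : (inner ℂ (A x) x : ℂ).re ≤ ν * ‖x‖ ^ 2 := hray x hx
    have ha0 : 0 ≤ (inner ℂ (A (A x)) (A x) : ℂ).re := hpos (A x)
    have hc0 : 0 ≤ (inner ℂ (A x) x : ℂ).re := hpos x
    have hAx0 : (0:ℝ) < ‖A x‖ := norm_pos_iff.mpr h0
    have hx0 : (0:ℝ) ≤ ‖x‖ := norm_nonneg x
    have hsq : ‖A x‖ ^ 2 ≤ ν ^ 2 * ‖x‖ ^ 2 := by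
      nlinarith [hdisc, mul_pos hAx0 hAx0, mul_le_mul ha hc hc0 (by positivity : (0:ℝ) ≤ ν * ‖A x‖ ^ 2)]
    nlinarith [hsq, hAx0, hν0, hx0, mul_nonneg hν0 hx0, sq_nonneg (‖A x‖ - ν * ‖x‖)]
  -- strict inequality ν < μ
  refine ⟨ν, hν0, ?_, fun x hx => hAF x hx, fun x hx => hnorm x hx⟩
  rcases lt_or_eq_of_le hνμ with h | h
  · exact h
  exfalso
  have hνpos : 0 < ν := h ▸ hA
  -- choose an approximating sequence
  have hseq : ∀ k : ℕ, ∃ x, x ∈ F ∧ ‖x‖ ≤ 1 ∧ ν - 1 / (k + 1) < (inner ℂ (A x) x : ℂ).re := by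
    intro k
    have hlt : ν - 1 / (k + 1) < sSup S := by
      have : (0:ℝ) < 1 / (k + 1) := by positivity
      linarith
    obtain ⟨r, hrS, hr⟩ := exists_lt_of_lt_csSup hSne hlt
    obtain ⟨x, hxF, hx1, rfl⟩ := hrS
    exact ⟨x, hxF, hx1, hr⟩
  choose u huF hu1 hulow using hseq
  have hr_tendsto : Tendsto (fun k => (inner ℂ (A (u k)) (u k) : ℂ).re) atTop (𝓝 ν) := by
    have hup : ∀ k, (inner ℂ (A (u k)) (u k) : ℂ).re ≤ ν := fun k =>
      le_csSup hSbdd ⟨u k, huF k, hu1 k, rfl⟩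
    have h1 : Tendsto (fun k : ℕ => ν - 1 / (k + 1 : ℝ)) atTop (𝓝 ν) := by
      have h1' : Tendsto (fun k : ℕ => ν - 1 / (k + 1 : ℝ)) atTop (𝓝 (ν - 0)) :=
        tendsto_const_nhds.sub tendsto_one_div_add_atTop_nhds_zero_nat
      rwa [sub_zero] at h1'
    exact tendsto_of_tendsto_of_tendsto_of_le_of_le h1 tendsto_const_nhds
      (fun k => (hulow k).le) hup
  -- A u k - ν u k → 0
  have hd : Tendsto (fun k => A (u k) - ((ν : ℂ)) • u k) atTop (𝓝 0) := by
    have hsqle : ∀ k, ‖A (u k) - ((ν : ℂ)) • u k‖ ^ 2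
        ≤ 2 * ν ^ 2 - 2 * ν * (inner ℂ (A (u k)) (u k) : ℂ).re := by
      intro k
      have hexp : ‖A (u k) - ((ν : ℂ)) • u k‖ ^ 2
          = ‖A (u k)‖ ^ 2 - 2 * ν * (inner ℂ (A (u k)) (u k) : ℂ).re + ν ^ 2 * ‖u k‖ ^ 2 := by
        rw [norm_sub_sq (𝕜 := ℂ)]
        have h4 : RCLike.re (inner ℂ (A (u k)) (((ν : ℂ)) • u k) : ℂ)
            = ν * (inner ℂ (A (u k)) (u k) : ℂ).re := by
          rw [inner_smul_right, RCLike.re_to_complex, Complex.re_ofReal_mul]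
        have h5 : ‖((ν : ℂ)) • u k‖ = ν * ‖u k‖ := by
          rw [norm_smul, Complex.norm_real, Real.norm_of_nonneg hν0]
        rw [h4, h5]
        ring
      have hnle : ‖A (u k)‖ ≤ ν := by
        calc ‖A (u k)‖ ≤ ν * ‖u k‖ := hnorm (u k) (huF k)
          _ ≤ ν * 1 := by gcongr; exact hu1 k
          _ = ν := mul_one ν
      have h1 : ‖A (u k)‖ ^ 2 ≤ ν ^ 2 := by nlinarith [norm_nonneg (A (u k))]
      have h2 : ν ^ 2 * ‖u k‖ ^ 2 ≤ ν ^ 2 := by nlinarith [sq_nonneg ν, pow_le_one₀ (norm_nonneg (u k)) (hu1 k) (n := 2)]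
      rw [hexp]; linarith
    have hsq0 : Tendsto (fun k => ‖A (u k) - ((ν : ℂ)) • u k‖ ^ 2) atTop (𝓝 0) := by
      have hub : Tendsto (fun k => 2 * ν ^ 2 - 2 * ν * (inner ℂ (A (u k)) (u k) : ℂ).re)
          atTop (𝓝 0) := by
        have hmul := hr_tendsto.const_mul (2 * ν)
        have h2 := (tendsto_const_nhds : Tendsto (fun _ : ℕ => 2 * ν ^ 2) atTop _).sub hmul
        have h0 : 2 * ν ^ 2 - 2 * ν * ν = 0 := by ring
        rw [h0] at h2
        exact h2
      exact tendsto_of_tendsto_of_tendsto_of_le_of_le tendsto_const_nhds hub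
        (fun k => sq_nonneg _) hsqle
    have : Tendsto (fun k => ‖A (u k) - ((ν : ℂ)) • u k‖) atTop (𝓝 0) := by
      have h3 : Tendsto ((fun r : ℝ => Real.sqrt r) ∘ fun k => ‖A (u k) - ((ν : ℂ)) • u k‖ ^ 2)
          atTop (𝓝 0) := by
        simpa using (Real.continuous_sqrt.tendsto 0).comp hsq0
      exact h3.congr fun k => Real.sqrt_sq (norm_nonneg _)
    exact tendsto_zero_iff_norm_tendsto_zero.mpr this
  -- compactness: extract convergent subsequence of A (u k)
  obtain ⟨K, hK, hKsub⟩ :=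
    (hcp : IsCompactOperator (A : H →ₗ[ℂ] H)).image_closedBall_subset_compact 1
  have hmemK : ∀ k, A (u k) ∈ K := fun k =>
    hKsub ⟨u k, Metric.mem_closedBall.mpr (by simpa using hu1 k), rfl⟩
  obtain ⟨z, hzK, φ, hφ, hφt⟩ := hK.tendsto_subseq hmemK
  -- u ∘ φ converges to w := ν⁻¹ z
  set w : H := ((ν : ℂ))⁻¹ • z with hw
  have hν0C : ((ν : ℂ)) ≠ 0 := by
    simp only [ne_eq, Complex.ofReal_eq_zero]; exact hνpos.ne'
  have hu_tendsto : Tendsto (fun k => u (φ k)) atTop (𝓝 w) := by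
    have h1 : Tendsto (fun k => ((ν : ℂ)) • u (φ k)) atTop (𝓝 z) := by
      have h2 : Tendsto (fun k => A (u (φ k)) - ((ν : ℂ)) • u (φ k)) atTop (𝓝 0) :=
        hd.comp hφ.tendsto_atTop
      have := hφt.sub h2
      simpa using this
    exact (h1.const_smul (((ν : ℂ))⁻¹)).congr fun k => inv_smul_smul₀ hν0C _
  have hwF : w ∈ F := by
    have hFc : IsClosed (F : Set H) := Submodule.isClosed_orthogonal E
    exact hFc.mem_of_tendsto hu_tendsto (Eventually.of_forall fun k => huF (φ k))
  have hAw : A w = ((ν : ℂ)) • w := by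
    have h1 : Tendsto (fun k => A (u (φ k))) atTop (𝓝 (A w)) :=
      (A.continuous.tendsto w).comp hu_tendsto
    have h2 : Tendsto (fun k => A (u (φ k))) atTop (𝓝 z) := hφt
    have hz : A w = z := tendsto_nhds_unique h1 h2
    rw [hz, hw, smul_smul, mul_inv_cancel₀ hν0C, one_smul]
  have hwne : w ≠ 0 := by
    intro hw0
    have h1 : Tendsto (fun k => (inner ℂ (A (u (φ k))) (u (φ k)) : ℂ).re) atTop (𝓝 ν) :=
      hr_tendsto.comp hφ.tendsto_atTop
    have hcont : Continuous fun x : H => (inner ℂ (A x) x : ℂ).re :=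
      (Complex.continuous_re).comp (continuous_inner.comp
        ((A.continuous.comp continuous_id).prodMk continuous_id))
    have h2 : Tendsto (fun k => (inner ℂ (A (u (φ k))) (u (φ k)) : ℂ).re) atTop
        (𝓝 ((inner ℂ (A w) w : ℂ).re)) := (hcont.tendsto w).comp hu_tendsto
    have := tendsto_nhds_unique h1 h2
    rw [hw0] at this
    simp at this
    exact hνpos.ne' this
  have hwE : w ∈ E := by
    rw [hE, Module.End.mem_eigenspace_iff]
    have : ((ν : ℂ)) = ((μ : ℂ)) := Complex.ofReal_inj.mpr h
    calc (A : H →ₗ[ℂ] H) w = A w := rfl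
      _ = ((ν : ℂ)) • w := hAw
      _ = ((μ : ℂ)) • w := by rw [this]
  have : (inner ℂ w w : ℂ) = 0 := (Submodule.mem_orthogonal _ _).mp hwF w hwE
  exact hwne (inner_self_eq_zero.mp this)


/-- Distributionally normalized power iteration: for a compact, self-adjoint,
positive-semidefinite operator `A ≠ 0` on a complex Hilbert space with `μ = ‖A‖`,
if `V = P U` is the orthogonal projection of `U` onto the eigenspace
`E = ker(A − μ·I)` (i.e. `V ∈ E` and `U − V ⟂ E`) and `⟨P U, Ψ⟩ ≠ 0`, then
`⟨AⁿU, Ψ⟩ ≠ 0` for all sufficiently large `n`, and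
`AⁿU / ⟨AⁿU, Ψ⟩ → P U / ⟨P U, Ψ⟩` in norm. -/
theorem stmt10 {H : Type*} [NormedAddCommGroup H] [InnerProductSpace ℂ H] [CompleteSpace H]
    (A : H →L[ℂ] H) (hsa : IsSelfAdjoint A) (hcp : IsCompactOperator A)
    (hpos : ∀ x : H, 0 ≤ (inner ℂ (A x) x : ℂ).re) (hA : 0 < ‖A‖)
    (U Ψ V : H)
    (hV : V ∈ Module.End.eigenspace (A : H →ₗ[ℂ] H) ((‖A‖ : ℂ)))
    (hUV : U - V ∈ (Module.End.eigenspace (A : H →ₗ[ℂ] H) ((‖A‖ : ℂ)))ᗮ)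
    (hne : (inner ℂ V Ψ : ℂ) ≠ 0) :
    (∀ᶠ n : ℕ in atTop, (inner ℂ ((A ^ n) U) Ψ : ℂ) ≠ 0) ∧
    Tendsto (fun n : ℕ => ((inner ℂ ((A ^ n) U) Ψ : ℂ))⁻¹ • (A ^ n) U) atTop
      (𝓝 (((inner ℂ V Ψ : ℂ))⁻¹ • V)) := by
  obtain ⟨ν, hν0, hνμ, hinv, hνb⟩ := aux_gap A hsa hcp hpos hA
  have hμ0 : ((‖A‖ : ℂ)) ≠ 0 := Complex.ofReal_ne_zero.mpr hA.ne'
  have hAV1 : A V = ((‖A‖ : ℂ)) • V := Module.End.mem_eigenspace_iff.mp hV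
  have hAV : ∀ n : ℕ, (A ^ n) V = (((‖A‖ : ℂ)) ^ n) • V := by
    intro n
    induction n with
    | zero => simp
    | succ n ih =>
      rw [pow_succ', ContinuousLinearMap.mul_apply, ih, map_smul, hAV1, smul_smul, ← pow_succ]
  set W := U - V with hW
  have hWiter : ∀ n : ℕ, (A ^ n) W ∈
      (Module.End.eigenspace (A : H →ₗ[ℂ] H) ((‖A‖ : ℂ)))ᗮ ∧ ‖(A ^ n) W‖ ≤ ν ^ n * ‖W‖ := by
    intro n
    induction n with
    | zero => exact ⟨by simpa using hUV, by simp⟩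
    | succ n ih =>
      obtain ⟨hm, hn⟩ := ih
      constructor
      · rw [pow_succ', ContinuousLinearMap.mul_apply]
        exact hinv _ hm
      · rw [pow_succ', ContinuousLinearMap.mul_apply]
        calc ‖A ((A ^ n) W)‖ ≤ ν * ‖(A ^ n) W‖ := hνb _ hm
          _ ≤ ν * (ν ^ n * ‖W‖) := by gcongr
          _ = ν ^ (n + 1) * ‖W‖ := by ring
  have hiter : ∀ n : ℕ, (A ^ n) U = (((‖A‖ : ℂ)) ^ n) • V + (A ^ n) W := by
    intro n
    have hU : U = V + W := by rw [hW]; abel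
    rw [hU, map_add, hAV n]
  set x : ℕ → H := fun n => ((((‖A‖ : ℂ)) ^ n))⁻¹ • (A ^ n) U with hx
  have hxsub : ∀ n, x n - V = ((((‖A‖ : ℂ)) ^ n))⁻¹ • (A ^ n) W := by
    intro n
    rw [hx]
    simp only
    rw [hiter n, smul_add, inv_smul_smul₀ (pow_ne_zero n hμ0)]
    abel
  have hxV : Tendsto x atTop (𝓝 V) := by
    rw [tendsto_iff_norm_sub_tendsto_zero]
    have hb : ∀ n : ℕ, ‖x n - V‖ ≤ (ν / ‖A‖) ^ n * ‖W‖ := by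
      intro n
      rw [hxsub n, norm_smul]
      have h1 : ‖((((‖A‖ : ℂ)) ^ n))⁻¹‖ = (‖A‖ ^ n)⁻¹ := by
        rw [norm_inv, norm_pow, Complex.norm_real, Real.norm_of_nonneg hA.le]
      rw [h1]
      calc (‖A‖ ^ n)⁻¹ * ‖(A ^ n) W‖ ≤ (‖A‖ ^ n)⁻¹ * (ν ^ n * ‖W‖) :=
            mul_le_mul_of_nonneg_left (hWiter n).2 (by positivity)
        _ = (ν / ‖A‖) ^ n * ‖W‖ := by
            rw [div_pow]
            field_simp
    have hg : Tendsto (fun n : ℕ => (ν / ‖A‖) ^ n * ‖W‖) atTop (𝓝 0) := by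
      have h0 : Tendsto (fun n : ℕ => (ν / ‖A‖) ^ n) atTop (𝓝 0) :=
        tendsto_pow_atTop_nhds_zero_of_lt_one (by positivity) ((div_lt_one hA).mpr hνμ)
      simpa using h0.mul_const ‖W‖
    exact squeeze_zero (fun n => norm_nonneg _) hb hg
  have hinner : Tendsto (fun n => (inner ℂ (x n) Ψ : ℂ)) atTop (𝓝 (inner ℂ V Ψ : ℂ)) :=
    hxV.inner tendsto_const_nhds
  have hev : ∀ᶠ n in atTop, (inner ℂ (x n) Ψ : ℂ) ≠ 0 := hinner.eventually_ne hne
  have hAnx : ∀ n, (A ^ n) U = (((‖A‖ : ℂ)) ^ n) • x n := by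
    intro n
    rw [hx]
    simp only
    rw [smul_inv_smul₀ (pow_ne_zero n hμ0)]
  have hrel : ∀ n, (inner ℂ ((A ^ n) U) Ψ : ℂ) = (((‖A‖ : ℂ)) ^ n) * (inner ℂ (x n) Ψ : ℂ) := by
    intro n
    rw [hAnx n, inner_smul_left, ← Complex.ofReal_pow, Complex.conj_ofReal, Complex.ofReal_pow]
  constructor
  · filter_upwards [hev] with n h
    rw [hrel n]
    exact mul_ne_zero (pow_ne_zero n hμ0) h
  · have htend : Tendsto (fun n => ((inner ℂ (x n) Ψ : ℂ))⁻¹ • x n) atTop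
        (𝓝 (((inner ℂ V Ψ : ℂ))⁻¹ • V)) := (hinner.inv₀ hne).smul hxV
    refine htend.congr fun n => ?_
    have hxn : x n = ((((‖A‖ : ℂ)) ^ n))⁻¹ • (A ^ n) U := rfl
    rw [hrel n, hxn, smul_smul, mul_inv]
    congr 1
    ring
end

section
/- Let a > 0. For ξ ∈ ℝ² define γ(ξ) = √(|ξ|² − 1) if |ξ| > 1 and γ(ξ) = 0 if |ξ| ≤ 1. Then the double integral ∫_{ℝ²} ∫_{ℝ²} e^{−a(γ(η′) + γ(η̃′))} · √(|1 − |η̃′|²|) / √(|1 − |η′|²|) d²η̃′ d²η′ is finite. -/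
open MeasureTheory Set Metric
open scoped ENNReal

/-- The evanescent decay rate `γ(ξ) = √(|ξ|² − 1)` for `|ξ| > 1`, and `0` otherwise. -/
noncomputable def gammaEv (ξ : EuclideanSpace ℝ (Fin 2)) : ℝ :=
  if 1 < ‖ξ‖ then Real.sqrt (‖ξ‖ ^ 2 - 1) else 0

namespace Stmt13Aux

noncomputable def gam (r : ℝ) : ℝ := if 1 < r then Real.sqrt (r ^ 2 - 1) else 0

lemma gammaEv_eq (ξ : EuclideanSpace ℝ (Fin 2)) : gammaEv ξ = gam ‖ξ‖ := rfl

lemma gam_meas : Measurable gam :=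
  Measurable.ite (measurableSet_lt measurable_const measurable_id)
    (((measurable_id.pow_const 2).sub measurable_const).sqrt) measurable_const

lemma gam_nonneg (r : ℝ) : 0 ≤ gam r := by
  unfold gam; split
  · exact Real.sqrt_nonneg _
  · exact le_refl 0

lemma gam_half {r : ℝ} (hr : 2 ≤ r) : r / 2 ≤ gam r := by
  have h1 : (1:ℝ) < r := by linarith
  unfold gam; rw [if_pos h1]
  calc r / 2 = Real.sqrt ((r/2)^2) := (Real.sqrt_sq (by linarith)).symm
    _ ≤ Real.sqrt (r^2 - 1) := Real.sqrt_le_sqrt (by nlinarith)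

lemma exp_gam_le_one {a r : ℝ} (ha : 0 < a) : Real.exp (-a * gam r) ≤ 1 := by
  rw [Real.exp_le_one_iff]
  have := gam_nonneg r
  nlinarith

lemma exp_gam_le_tail {a r : ℝ} (ha : 0 < a) (hr : 2 ≤ r) :
    Real.exp (-a * gam r) ≤ Real.exp (-(a/2) * r) := by
  rw [Real.exp_le_exp]
  have h := gam_half hr
  nlinarith

lemma rpow_neg_half_of_neg {y : ℝ} (hy : y < 0) : y ^ (-(1/2):ℝ) = 0 := by
  rw [Real.rpow_def_of_neg hy]
  have : Real.cos (-(1/2) * Real.pi) = 0 := by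
    rw [show (-(1/2) * Real.pi : ℝ) = -(Real.pi/2) by ring, Real.cos_neg,
      Real.cos_pi_div_two]
  rw [this, mul_zero]

lemma rpow_neg_half_nonneg (y : ℝ) : 0 ≤ y ^ (-(1/2):ℝ) := by
  rcases lt_trichotomy y 0 with h | h | h
  · rw [rpow_neg_half_of_neg h]
  · subst h; rw [Real.zero_rpow (by norm_num : (-(1/2):ℝ) ≠ 0)]
  · exact (Real.rpow_pos_of_pos h _).le

lemma abs_rpow_split (x : ℝ) :
    |x| ^ (-(1/2):ℝ) = x ^ (-(1/2):ℝ) + (-x) ^ (-(1/2):ℝ) := by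
  rcases lt_trichotomy x 0 with h | h | h
  · rw [abs_of_neg h, rpow_neg_half_of_neg h, zero_add]
  · subst h; simp [Real.zero_rpow (by norm_num : (-(1/2):ℝ) ≠ 0)]
  · rw [abs_of_pos h, rpow_neg_half_of_neg (neg_lt_zero.mpr h), add_zero]

lemma tail_dom {a : ℝ} (ha : 0 < a) :
    IntegrableOn (fun r : ℝ => r ^ 2 * Real.exp (-(a/2) * r)) (Ioi 2) := by
  have h := integrableOn_rpow_mul_exp_neg_mul_rpow
    (by norm_num : (-1:ℝ) < 2) one_pos (half_pos ha)
  have h2 : IntegrableOn (fun x : ℝ => x ^ (2:ℝ) * Real.exp (-(a/2) * x ^ (1:ℝ)))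
      (Ioi 2) := h.mono_set (Ioi_subset_Ioi (by norm_num))
  refine h2.congr_fun (fun x _ => ?_) measurableSet_Ioi
  dsimp only
  rw [Real.rpow_one, show (2:ℝ) = ((2:ℕ):ℝ) by norm_num, Real.rpow_natCast]

lemma sing_dom :
    IntegrableOn (fun x : ℝ => (x - 1) ^ (-(1/2):ℝ) + (1 - x) ^ (-(1/2):ℝ))
      (Ioc (0:ℝ) 2) := by
  have base : IntervalIntegrable (fun x : ℝ => x ^ (-(1/2):ℝ)) volume (-1) 1 :=
    intervalIntegral.intervalIntegrable_rpow' (by norm_num)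
  have h1 : IntervalIntegrable (fun x : ℝ => (x - 1) ^ (-(1/2):ℝ)) volume 0 2 := by
    have h := base.comp_sub_right 1
    rw [show (-1:ℝ) + 1 = 0 by norm_num, show (1:ℝ) + 1 = 2 by norm_num] at h
    exact h
  have h2 : IntervalIntegrable (fun x : ℝ => (1 - x) ^ (-(1/2):ℝ)) volume 0 2 := by
    have hneg := (IntervalIntegrable.iff_comp_neg (a := -1) (b := 1)
      (f := fun x : ℝ => x ^ (-(1/2):ℝ)) enorm_ne_top).mp base
    rw [neg_neg] at hneg
    have h := (hneg.comp_sub_right 1).symm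
    simp only [neg_sub] at h
    rw [show (-1:ℝ) + 1 = 0 by norm_num, show (1:ℝ) + 1 = 2 by norm_num] at h
    exact h
  rw [intervalIntegrable_iff, uIoc_of_le (by norm_num : (0:ℝ) ≤ 2)] at h1 h2
  exact h1.add h2

lemma measG {a : ℝ} : Measurable fun r : ℝ =>
    r * (Real.exp (-a * gam r) * Real.sqrt |1 - r ^ 2|) :=
  measurable_id.mul (((gam_meas.const_mul (-a)).exp).mul
    ((measurable_const.sub (measurable_id.pow_const 2)).abs.sqrt))

lemma measF {a : ℝ} : Measurable fun r : ℝ =>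
    r * (Real.exp (-a * gam r) / Real.sqrt |1 - r ^ 2|) :=
  measurable_id.mul (((gam_meas.const_mul (-a)).exp).div
    ((measurable_const.sub (measurable_id.pow_const 2)).abs.sqrt))

lemma oneDimG {a : ℝ} (ha : 0 < a) :
    IntegrableOn (fun r : ℝ => r * (Real.exp (-a * gam r) * Real.sqrt |1 - r ^ 2|))
      (Ioi 0) := by
  rw [← Ioc_union_Ioi_eq_Ioi (by norm_num : (0:ℝ) ≤ 2)]
  refine IntegrableOn.union ?_ ?_
  · refine Measure.integrableOn_of_bounded (M := 4) measure_Ioc_lt_top.ne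
      measG.aestronglyMeasurable ?_
    filter_upwards [ae_restrict_mem measurableSet_Ioc] with x hx
    have he1 : Real.exp (-a * gam x) ≤ 1 := exp_gam_le_one ha
    have he0 : 0 < Real.exp (-a * gam x) := Real.exp_pos _
    have hs0 : 0 ≤ Real.sqrt |1 - x ^ 2| := Real.sqrt_nonneg _
    have hs2 : Real.sqrt |1 - x ^ 2| ≤ 2 := by
      have h4 : |1 - x ^ 2| ≤ 4 := abs_le.mpr ⟨by nlinarith [hx.1, hx.2], by nlinarith [hx.1, hx.2]⟩
      calc Real.sqrt |1 - x ^ 2| ≤ Real.sqrt 4 := Real.sqrt_le_sqrt h4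
        _ = 2 := by rw [show (4:ℝ) = 2 ^ 2 by norm_num, Real.sqrt_sq (by norm_num : (0:ℝ) ≤ 2)]
    rw [Real.norm_eq_abs, abs_of_nonneg (mul_nonneg hx.1.le (by positivity))]
    calc x * (Real.exp (-a * gam x) * Real.sqrt |1 - x ^ 2|)
        ≤ 2 * (1 * 2) := mul_le_mul hx.2
          (mul_le_mul he1 hs2 hs0 (by norm_num))
          (mul_nonneg he0.le hs0) (by norm_num)
      _ = 4 := by norm_num
  · refine (tail_dom ha).mono' measG.aestronglyMeasurable ?_
    filter_upwards [ae_restrict_mem measurableSet_Ioi] with x hx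
    have hx2 : (2:ℝ) ≤ x := le_of_lt hx
    have hx0 : (0:ℝ) ≤ x := by linarith
    have hsx : Real.sqrt |1 - x ^ 2| ≤ x := by
      calc Real.sqrt |1 - x ^ 2| ≤ Real.sqrt (x ^ 2) :=
            Real.sqrt_le_sqrt (abs_le.mpr ⟨by nlinarith, by nlinarith⟩)
        _ = x := Real.sqrt_sq hx0
    have hE := exp_gam_le_tail ha hx2
    rw [Real.norm_eq_abs, abs_of_nonneg (by positivity)]
    calc x * (Real.exp (-a * gam x) * Real.sqrt |1 - x ^ 2|)
        ≤ x * (Real.exp (-(a/2) * x) * x) := by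
          refine mul_le_mul_of_nonneg_left ?_ hx0
          exact mul_le_mul hE hsx (Real.sqrt_nonneg _) (Real.exp_pos _).le
      _ = x ^ 2 * Real.exp (-(a/2) * x) := by ring

lemma oneDimF {a : ℝ} (ha : 0 < a) :
    IntegrableOn (fun r : ℝ => r * (Real.exp (-a * gam r) / Real.sqrt |1 - r ^ 2|))
      (Ioi 0) := by
  rw [← Ioc_union_Ioi_eq_Ioi (by norm_num : (0:ℝ) ≤ 2)]
  refine IntegrableOn.union ?_ ?_
  · refine (Integrable.const_mul sing_dom 2).mono' measF.aestronglyMeasurable ?_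
    filter_upwards [ae_restrict_mem measurableSet_Ioc] with x hx
    have he1 : Real.exp (-a * gam x) ≤ 1 := exp_gam_le_one ha
    have he0 : 0 ≤ Real.exp (-a * gam x) := (Real.exp_pos _).le
    rw [Real.norm_eq_abs, abs_of_nonneg (mul_nonneg hx.1.le (by positivity))]
    rcases eq_or_ne x 1 with rfl | hx1
    · norm_num
    · have hne : (1 : ℝ) - x ^ 2 ≠ 0 := by
        intro h
        have : (1 - x) * (1 + x) = 0 := by nlinarith
        rcases mul_eq_zero.mp this with h' | h'
        · exact hx1 (by linarith)
        · nlinarith [hx.1]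
      have hs : 0 < Real.sqrt |1 - x ^ 2| := Real.sqrt_pos.mpr (abs_pos.mpr hne)
      have hxx : |1 - x| ≤ |1 - x ^ 2| := by
        rw [show (1:ℝ) - x ^ 2 = (1 - x) * (1 + x) by ring, abs_mul]
        refine le_mul_of_one_le_right (abs_nonneg _) ?_
        rw [abs_of_pos (by nlinarith [hx.1] : (0:ℝ) < 1 + x)]
        linarith [hx.1]
      have hkey : Real.sqrt |1 - x| ≤ Real.sqrt |1 - x ^ 2| := Real.sqrt_le_sqrt hxx
      have hsx : 0 < Real.sqrt |1 - x| :=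
        Real.sqrt_pos.mpr (abs_pos.mpr (sub_ne_zero.mpr (fun h => hx1 h.symm)))
      have step1 : x * (Real.exp (-a * gam x) / Real.sqrt |1 - x ^ 2|)
          ≤ 2 * (1 / Real.sqrt |1 - x ^ 2|) := by
        have h1 : Real.exp (-a * gam x) / Real.sqrt |1 - x ^ 2|
            ≤ 1 / Real.sqrt |1 - x ^ 2| := by gcongr
        have h2 : x ≤ 2 := hx.2
        have h3 : 0 ≤ Real.exp (-a * gam x) / Real.sqrt |1 - x ^ 2| := by positivity
        exact mul_le_mul h2 h1 h3 (by norm_num)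
      have step2 : 1 / Real.sqrt |1 - x ^ 2| ≤ 1 / Real.sqrt |1 - x| :=
        one_div_le_one_div_of_le hsx hkey
      have step3 : 1 / Real.sqrt |1 - x| = (x - 1) ^ (-(1/2):ℝ) + (1 - x) ^ (-(1/2):ℝ) := by
        rw [Real.sqrt_eq_rpow, one_div, ← Real.rpow_neg (abs_nonneg _),
          abs_sub_comm, abs_rpow_split, neg_sub]
      calc x * (Real.exp (-a * gam x) / Real.sqrt |1 - x ^ 2|)
          ≤ 2 * (1 / Real.sqrt |1 - x ^ 2|) := step1
        _ ≤ 2 * (1 / Real.sqrt |1 - x|) := by linarith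
        _ = 2 * ((x - 1) ^ (-(1/2):ℝ) + (1 - x) ^ (-(1/2):ℝ)) := by rw [step3]
  · refine (tail_dom ha).mono' measF.aestronglyMeasurable ?_
    filter_upwards [ae_restrict_mem measurableSet_Ioi] with x hx
    have hx2 : (2:ℝ) ≤ x := le_of_lt hx
    have hx0 : (0:ℝ) ≤ x := by linarith
    have hs1 : (1:ℝ) ≤ Real.sqrt |1 - x ^ 2| := by
      have habs : |1 - x ^ 2| = x ^ 2 - 1 := by
        rw [abs_of_nonpos (by nlinarith : (1:ℝ) - x ^ 2 ≤ 0)]; ring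
      rw [habs]
      calc (1:ℝ) = Real.sqrt 1 := Real.sqrt_one.symm
        _ ≤ Real.sqrt (x ^ 2 - 1) := Real.sqrt_le_sqrt (by nlinarith)
    have hE := exp_gam_le_tail ha hx2
    rw [Real.norm_eq_abs, abs_of_nonneg (by positivity)]
    calc x * (Real.exp (-a * gam x) / Real.sqrt |1 - x ^ 2|)
        ≤ x * Real.exp (-a * gam x) := by
          refine mul_le_mul_of_nonneg_left ?_ hx0
          exact div_le_self (Real.exp_pos _).le hs1
      _ ≤ x * (Real.exp (-(a/2) * x) * x) := by
          refine mul_le_mul_of_nonneg_left ?_ hx0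
          calc Real.exp (-a * gam x) ≤ Real.exp (-(a/2) * x) := hE
            _ ≤ Real.exp (-(a/2) * x) * x := le_mul_of_one_le_right (Real.exp_pos _).le (by linarith)
      _ = x ^ 2 * Real.exp (-(a/2) * x) := by ring

lemma lintegral_radial (g : ℝ → ℝ≥0∞) (hg : Measurable g) :
    ∫⁻ x : EuclideanSpace ℝ (Fin 2), g ‖x‖ =
      (volume : Measure (EuclideanSpace ℝ (Fin 2))).toSphere univ *
        ∫⁻ r in Ioi (0:ℝ), ENNReal.ofReal r * g r := by
  set E2 := EuclideanSpace ℝ (Fin 2)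
  set μ : Measure E2 := volume with hμ
  have hdim : Module.finrank ℝ E2 = 2 := finrank_euclideanSpace_fin
  have hmp := μ.measurePreserving_homeomorphUnitSphereProd
  rw [hdim, (by rfl : (2 - 1 : ℕ) = 1)] at hmp
  have hmeas : Measurable fun p : (sphere (0 : E2) 1 × Ioi (0:ℝ)) => g p.2.1 :=
    hg.comp (measurable_subtype_coe.comp measurable_snd)
  have h1 : ∫⁻ x : E2, g ‖x‖ ∂μ
      = ∫⁻ x : ({0}ᶜ : Set E2), g ‖x.1‖ ∂(μ.comap (↑)) := by
    rw [lintegral_subtype_comap (measurableSet_singleton (0:E2)).compl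
      (fun y : E2 => g ‖y‖), MeasureTheory.restrict_compl_singleton]
  have h2 : ∫⁻ x : ({0}ᶜ : Set E2), g ‖x.1‖ ∂(μ.comap (↑))
      = ∫⁻ p : sphere (0:E2) 1 × Ioi (0:ℝ), g p.2.1
          ∂(μ.toSphere.prod (Measure.volumeIoiPow 1)) := by
    rw [← hmp.lintegral_comp hmeas]
    refine lintegral_congr fun x => ?_
    simp
  have h3 : ∫⁻ p : sphere (0:E2) 1 × Ioi (0:ℝ), g p.2.1
          ∂(μ.toSphere.prod (Measure.volumeIoiPow 1))
      = μ.toSphere univ * ∫⁻ r : Ioi (0:ℝ), g r.1 ∂(Measure.volumeIoiPow 1) := by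
    rw [lintegral_prod _ hmeas.aemeasurable]
    simp [lintegral_const, mul_comm]
  have h4 : ∫⁻ r : Ioi (0:ℝ), g r.1 ∂(Measure.volumeIoiPow 1)
      = ∫⁻ r in Ioi (0:ℝ), ENNReal.ofReal r * g r := by
    rw [Measure.volumeIoiPow,
      lintegral_withDensity_eq_lintegral_mul _
        ((measurable_subtype_coe.pow_const 1).ennreal_ofReal)
        (show Measurable fun r : Ioi (0:ℝ) => g r.1 from hg.comp measurable_subtype_coe)]
    simp only [Pi.mul_apply]
    rw [lintegral_subtype_comap measurableSet_Ioi
        (fun r : ℝ => ENNReal.ofReal (r ^ 1) * g r)]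
    simp
  rw [h1, h2, h3, h4]

lemma sphere_const_lt_top :
    (volume : Measure (EuclideanSpace ℝ (Fin 2))).toSphere univ < ⊤ := by
  rw [Measure.toSphere_apply_univ]
  exact ENNReal.mul_lt_top (ENNReal.natCast_lt_top _) measure_ball_lt_top

lemma lt_topG {a : ℝ} (ha : 0 < a) :
    ∫⁻ x : EuclideanSpace ℝ (Fin 2),
      ENNReal.ofReal (Real.exp (-a * gam ‖x‖) * Real.sqrt |1 - ‖x‖ ^ 2|) < ⊤ := by
  rw [lintegral_radial
    (fun r => ENNReal.ofReal (Real.exp (-a * gam r) * Real.sqrt |1 - r ^ 2|))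
    ((((gam_meas.const_mul (-a)).exp).mul
      ((measurable_const.sub (measurable_id.pow_const 2)).abs.sqrt)).ennreal_ofReal)]
  refine ENNReal.mul_lt_top sphere_const_lt_top ?_
  have hcongr : ∫⁻ r in Ioi (0:ℝ), ENNReal.ofReal r *
        ENNReal.ofReal (Real.exp (-a * gam r) * Real.sqrt |1 - r ^ 2|)
      = ∫⁻ r in Ioi (0:ℝ),
        ENNReal.ofReal (r * (Real.exp (-a * gam r) * Real.sqrt |1 - r ^ 2|)) := by
    refine setLIntegral_congr_fun measurableSet_Ioi (fun r hr => ?_)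
    rw [← ENNReal.ofReal_mul (le_of_lt hr)]
  rw [hcongr]
  exact (oneDimG ha).setLIntegral_lt_top

lemma lt_topF {a : ℝ} (ha : 0 < a) :
    ∫⁻ x : EuclideanSpace ℝ (Fin 2),
      ENNReal.ofReal (Real.exp (-a * gam ‖x‖) / Real.sqrt |1 - ‖x‖ ^ 2|) < ⊤ := by
  rw [lintegral_radial
    (fun r => ENNReal.ofReal (Real.exp (-a * gam r) / Real.sqrt |1 - r ^ 2|))
    ((((gam_meas.const_mul (-a)).exp).div
      ((measurable_const.sub (measurable_id.pow_const 2)).abs.sqrt)).ennreal_ofReal)]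
  refine ENNReal.mul_lt_top sphere_const_lt_top ?_
  have hcongr : ∫⁻ r in Ioi (0:ℝ), ENNReal.ofReal r *
        ENNReal.ofReal (Real.exp (-a * gam r) / Real.sqrt |1 - r ^ 2|)
      = ∫⁻ r in Ioi (0:ℝ),
        ENNReal.ofReal (r * (Real.exp (-a * gam r) / Real.sqrt |1 - r ^ 2|)) := by
    refine setLIntegral_congr_fun measurableSet_Ioi (fun r hr => ?_)
    rw [← ENNReal.ofReal_mul (le_of_lt hr)]
  rw [hcongr]
  exact (oneDimF ha).setLIntegral_lt_top

end Stmt13Aux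

/-- For every `a > 0`, the double integral
`∫∫ e^(−a(γ(η′)+γ(η̃′))) · √(|1 − |η̃′|²|)/√(|1 − |η′|²|) d²η̃′ d²η′` is finite. -/
theorem stmt13 (a : ℝ) (ha : 0 < a) :
    (∫⁻ η' : EuclideanSpace ℝ (Fin 2), ∫⁻ ηt' : EuclideanSpace ℝ (Fin 2),
        ENNReal.ofReal (Real.exp (-a * (gammaEv η' + gammaEv ηt')) *
          Real.sqrt |1 - ‖ηt'‖ ^ 2| / Real.sqrt |1 - ‖η'‖ ^ 2|)) < ⊤ := by
  have hG := Stmt13Aux.lt_topG (a := a) ha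
  have hF := Stmt13Aux.lt_topF (a := a) ha
  have step1 : ∀ η' : EuclideanSpace ℝ (Fin 2),
      (∫⁻ ηt' : EuclideanSpace ℝ (Fin 2),
        ENNReal.ofReal (Real.exp (-a * (gammaEv η' + gammaEv ηt')) *
          Real.sqrt |1 - ‖ηt'‖ ^ 2| / Real.sqrt |1 - ‖η'‖ ^ 2|))
      = ENNReal.ofReal (Real.exp (-a * gammaEv η') / Real.sqrt |1 - ‖η'‖ ^ 2|) *
        ∫⁻ x : EuclideanSpace ℝ (Fin 2),
          ENNReal.ofReal (Real.exp (-a * Stmt13Aux.gam ‖x‖) * Real.sqrt |1 - ‖x‖ ^ 2|) := by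
    intro η'
    rw [← lintegral_const_mul' _ _ ENNReal.ofReal_ne_top]
    refine lintegral_congr fun ηt' => ?_
    rw [← ENNReal.ofReal_mul (by positivity)]
    congr 1
    simp only [Stmt13Aux.gammaEv_eq]
    rw [mul_add, Real.exp_add]
    ring
  simp_rw [step1]
  rw [lintegral_mul_const' _ _ hG.ne]
  exact ENNReal.mul_lt_top hF hG
end

section
/- Let h > 0, k > 0, and let V ∈ L¹(ℝ³) be supported in { y ∈ ℝ³ : y₃ ≤ −h }. For ξ ∈ ℝ² define the complex number η₃(ξ) = √(1 − |ξ|²) if |ξ| ≤ 1 and η₃(ξ) = i·√(|ξ|² − 1) if |ξ| > 1, and write η⁺ = (η′, η₃(η′)), η̃⁻ = (η̃′, −η₃(η̃′)). Then ∫_{ℝ²} ∫_{ℝ²} | ∫_{ℝ³} e^{i k (η̃⁻ − η⁺)·y} V(y) d³y |² · √(|1 − |η̃′|²|) / √(|1 − |η′|²|) d²η̃′ d²η′ < ∞. That is, the Born term of the fixed-frequency scattering operator has finite Hilbert–Schmidt norm on the weighted space L²_g. -/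
open MeasureTheory

/-- The (possibly complex) vertical wave number `η₃(ξ) = √(1 − |ξ|²)` for `|ξ| ≤ 1`
and `η₃(ξ) = i·√(|ξ|² − 1)` for `|ξ| > 1`. -/
noncomputable def etaThree (ξ : EuclideanSpace ℝ (Fin 2)) : ℂ :=
  if ‖ξ‖ ≤ 1 then (Real.sqrt (1 - ‖ξ‖ ^ 2) : ℂ) else Complex.I * (gammaEv ξ : ℂ)

open Set Metric
open scoped ENNReal NNReal


noncomputable def gRad (r : ℝ) : ℝ := if 1 < r then Real.sqrt (r ^ 2 - 1) else 0

lemma gRad_nonneg (r : ℝ) : 0 ≤ gRad r := by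
  unfold gRad; split
  · exact Real.sqrt_nonneg _
  · exact le_refl 0

lemma gRad_meas : Measurable gRad :=
  Measurable.ite (measurableSet_lt measurable_const measurable_id)
    (Real.continuous_sqrt.measurable.comp ((measurable_id.pow_const 2).sub measurable_const))
    measurable_const

lemma lint_of_integrableOn {s : Set ℝ} {f : ℝ → ℝ} (hf : IntegrableOn f s) :
    ∫⁻ x in s, ENNReal.ofReal (f x) < ⊤ := by
  refine lt_of_le_of_lt (lintegral_mono fun x => ?_) hf.2
  exact (ENNReal.ofReal_le_ofReal (le_abs_self _)).trans
    (Real.enorm_eq_ofReal_abs (f x)).ge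

lemma key_tail {c r x s : ℝ} (hc : 0 < c) (hr : 1 < r) (hx : r - 1 ≤ x)
    (hs0 : 0 ≤ s) (hs : s ≤ r) :
    r * (Real.exp (-(c * x)) * s) ≤ (4 / c) ^ 2 * Real.exp c * Real.exp (-(c / 2) * r) := by
  have hr0 : (0:ℝ) ≤ r := by linarith
  have h1 : Real.exp (-(c * x)) ≤ Real.exp (-(c * (r - 1))) :=
    Real.exp_le_exp.2 (by nlinarith)
  have h2 : r ≤ 4 / c * Real.exp (c / 4 * r) := by
    have ha := Real.add_one_le_exp (c / 4 * r)
    have hb : c / 4 * r ≤ Real.exp (c / 4 * r) := by linarith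
    have hcc : c ≠ 0 := ne_of_gt hc
    calc r = 4 / c * (c / 4 * r) := by field_simp
      _ ≤ 4 / c * Real.exp (c / 4 * r) :=
        mul_le_mul_of_nonneg_left hb (by positivity)
  have step1 : r * (Real.exp (-(c * x)) * s) ≤ r * (Real.exp (-(c * (r - 1))) * r) :=
    mul_le_mul_of_nonneg_left (mul_le_mul h1 hs hs0 (Real.exp_nonneg _)) hr0
  have step2 : r * (Real.exp (-(c * (r - 1))) * r)
      ≤ (4 / c * Real.exp (c / 4 * r)) * (Real.exp (-(c * (r - 1)))
          * (4 / c * Real.exp (c / 4 * r))) := by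
    have hE : 0 ≤ Real.exp (-(c * (r - 1))) := Real.exp_nonneg _
    have h4c : (0:ℝ) ≤ 4 / c * Real.exp (c / 4 * r) := by positivity
    exact mul_le_mul h2 (mul_le_mul_of_nonneg_left h2 hE) (mul_nonneg hE hr0) h4c
  have eqR : (4 / c * Real.exp (c / 4 * r)) * (Real.exp (-(c * (r - 1)))
      * (4 / c * Real.exp (c / 4 * r)))
      = (4 / c) ^ 2 * Real.exp c * Real.exp (-(c / 2) * r) := by
    rw [show (4 / c * Real.exp (c / 4 * r)) * (Real.exp (-(c * (r - 1)))
        * (4 / c * Real.exp (c / 4 * r)))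
        = (4 / c) ^ 2 * (Real.exp (c / 4 * r) * Real.exp (-(c * (r - 1)))
            * Real.exp (c / 4 * r)) from by ring,
      ← Real.exp_add, ← Real.exp_add,
      show c / 4 * r + -(c * (r - 1)) + c / 4 * r = c + -(c / 2) * r from by ring,
      Real.exp_add, mul_assoc]
  calc r * (Real.exp (-(c * x)) * s) ≤ _ := step1
    _ ≤ _ := step2
    _ = _ := eqR

lemma tail_lint (a : ℝ) {c : ℝ} (D : ℝ) (hc : 0 < c) :
    ∫⁻ r in Ioi a, ENNReal.ofReal (D * Real.exp (-c * r)) < ⊤ :=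
  lint_of_integrableOn ((exp_neg_integrableOn_Ioi a hc).const_mul D)

lemma sqrt_abs_le {r : ℝ} (hr : 1 < r) : Real.sqrt |1 - r ^ 2| ≤ r := by
  have h1 : |1 - r ^ 2| = r ^ 2 - 1 := by
    rw [abs_of_nonpos (by nlinarith)]; ring
  rw [h1]
  calc Real.sqrt (r ^ 2 - 1) ≤ Real.sqrt (r ^ 2) := Real.sqrt_le_sqrt (by nlinarith)
    _ = r := Real.sqrt_sq (by linarith)

lemma gRad_lb {r : ℝ} (hr : 1 < r) : r - 1 ≤ gRad r := by
  rw [gRad, if_pos hr, Real.le_sqrt (by linarith) (by nlinarith)]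
  nlinarith

lemma exp_gRad_le_one {c : ℝ} (r : ℝ) (hc : 0 < c) : Real.exp (-(c * gRad r)) ≤ 1 :=
  Real.exp_le_one_iff.2 (neg_nonpos.2 (mul_nonneg hc.le (gRad_nonneg r)))

lemma lintQ {c : ℝ} (hc : 0 < c) :
    ∫⁻ r in Ioi (0:ℝ),
      ENNReal.ofReal r * ENNReal.ofReal (Real.exp (-(c * gRad r)) * Real.sqrt |1 - r ^ 2|)
      < ⊤ := by
  rw [← Set.Ioc_union_Ioi_eq_Ioi (zero_le_one (α := ℝ)),
    lintegral_union measurableSet_Ioi (Set.Ioc_disjoint_Ioi le_rfl)]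
  refine ENNReal.add_lt_top.2 ⟨?_, ?_⟩
  · calc ∫⁻ r in Ioc (0:ℝ) 1, ENNReal.ofReal r *
          ENNReal.ofReal (Real.exp (-(c * gRad r)) * Real.sqrt |1 - r ^ 2|)
        ≤ ∫⁻ _ in Ioc (0:ℝ) 1, 1 := by
          refine setLIntegral_mono' measurableSet_Ioc fun r hr => ?_
          have h1 : ENNReal.ofReal r ≤ 1 := by
            rw [← ENNReal.ofReal_one]; exact ENNReal.ofReal_le_ofReal hr.2
          have h2 : ENNReal.ofReal (Real.exp (-(c * gRad r)) * Real.sqrt |1 - r ^ 2|) ≤ 1 := by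
            rw [← ENNReal.ofReal_one]
            refine ENNReal.ofReal_le_ofReal
              (mul_le_one₀ (exp_gRad_le_one r hc) (Real.sqrt_nonneg _) ?_)
            exact Real.sqrt_le_one.2
              (abs_le.2 ⟨by nlinarith [hr.1, hr.2], by nlinarith [hr.1, hr.2]⟩)
          calc ENNReal.ofReal r * _ ≤ 1 * 1 := mul_le_mul' h1 h2
            _ = 1 := by simp
      _ < ⊤ := by simp [lintegral_const, Real.volume_Ioc]
  · calc ∫⁻ r in Ioi (1:ℝ), ENNReal.ofReal r *
          ENNReal.ofReal (Real.exp (-(c * gRad r)) * Real.sqrt |1 - r ^ 2|)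
        ≤ ∫⁻ r in Ioi (1:ℝ),
            ENNReal.ofReal ((4 / c) ^ 2 * Real.exp c * Real.exp (-(c / 2) * r)) := by
          refine setLIntegral_mono' measurableSet_Ioi fun r hr => ?_
          rw [← ENNReal.ofReal_mul (by linarith [mem_Ioi.1 hr] : (0:ℝ) ≤ r)]
          exact ENNReal.ofReal_le_ofReal
            (key_tail hc hr (gRad_lb hr) (Real.sqrt_nonneg _) (sqrt_abs_le hr))
      _ < ⊤ := tail_lint 1 _ (half_pos hc)

lemma rpow_half_int : IntervalIntegrable (fun x : ℝ => x ^ (-(1/2) : ℝ)) volume 0 1 :=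
  intervalIntegral.intervalIntegrable_rpow' (by norm_num)

lemma lintP {c : ℝ} (D : ℝ) (hD : 0 ≤ D) (hc : 0 < c) :
    ∫⁻ r in Ioi (0:ℝ),
      ENNReal.ofReal r * ENNReal.ofReal (D * Real.exp (-(c * gRad r)) / Real.sqrt |1 - r ^ 2|)
      < ⊤ := by
  rw [← Set.Ioc_union_Ioi_eq_Ioi (zero_le_one (α := ℝ)),
    lintegral_union measurableSet_Ioi (Set.Ioc_disjoint_Ioi le_rfl)]
  refine ENNReal.add_lt_top.2 ⟨?_, ?_⟩
  · calc ∫⁻ r in Ioc (0:ℝ) 1, ENNReal.ofReal r *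
          ENNReal.ofReal (D * Real.exp (-(c * gRad r)) / Real.sqrt |1 - r ^ 2|)
        ≤ ∫⁻ r in Ioc (0:ℝ) 1, ENNReal.ofReal (D * (1 - r) ^ (-(1/2) : ℝ)) := by
          refine setLIntegral_mono' measurableSet_Ioc fun r hr => ?_
          rw [← ENNReal.ofReal_mul (le_of_lt hr.1)]
          refine ENNReal.ofReal_le_ofReal ?_
          have hg : gRad r = 0 := if_neg (not_lt.2 hr.2)
          have habs : |1 - r ^ 2| = 1 - r ^ 2 := abs_of_nonneg (by nlinarith [hr.1, hr.2])
          have hrpow : (1 - r) ^ (-(1/2) : ℝ) = (Real.sqrt (1 - r))⁻¹ := by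
            rw [Real.rpow_neg (by linarith [hr.2]), Real.sqrt_eq_rpow]
          rw [hg, mul_zero, neg_zero, Real.exp_zero, mul_one, habs, hrpow]
          have key : r / Real.sqrt (1 - r ^ 2) ≤ (Real.sqrt (1 - r))⁻¹ := by
            rcases eq_or_lt_of_le hr.2 with h1 | h1
            · subst h1; norm_num [Real.sqrt_zero]
            · have hs1 : Real.sqrt (1 - r) ≤ Real.sqrt (1 - r ^ 2) :=
                Real.sqrt_le_sqrt (by nlinarith [hr.1])
              have hs0 : 0 < Real.sqrt (1 - r) := Real.sqrt_pos.2 (by linarith)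
              calc r / Real.sqrt (1 - r ^ 2) ≤ 1 / Real.sqrt (1 - r) :=
                  div_le_div₀ zero_le_one hr.2 hs0 hs1
                _ = (Real.sqrt (1 - r))⁻¹ := one_div _
          calc r * (D / Real.sqrt (1 - r ^ 2)) = D * (r / Real.sqrt (1 - r ^ 2)) := by ring
            _ ≤ D * (Real.sqrt (1 - r))⁻¹ := mul_le_mul_of_nonneg_left key hD
      _ < ⊤ := by
          refine lint_of_integrableOn (Integrable.const_mul ?_ D)
          have h := (rpow_half_int.comp_sub_left 1).symm
          norm_num at h
          exact (intervalIntegrable_iff_integrableOn_Ioc_of_le zero_le_one).1 h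
  · rw [← Set.Ioc_union_Ioi_eq_Ioi (by norm_num : (1:ℝ) ≤ 2),
      lintegral_union measurableSet_Ioi (Set.Ioc_disjoint_Ioi le_rfl)]
    refine ENNReal.add_lt_top.2 ⟨?_, ?_⟩
    · calc ∫⁻ r in Ioc (1:ℝ) 2, ENNReal.ofReal r *
            ENNReal.ofReal (D * Real.exp (-(c * gRad r)) / Real.sqrt |1 - r ^ 2|)
          ≤ ∫⁻ r in Ioc (1:ℝ) 2, ENNReal.ofReal (D * 2 * (r - 1) ^ (-(1/2) : ℝ)) := by
            refine setLIntegral_mono' measurableSet_Ioc fun r hr => ?_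
            rw [← ENNReal.ofReal_mul (by linarith [hr.1] : (0:ℝ) ≤ r)]
            refine ENNReal.ofReal_le_ofReal ?_
            have hr1 : 1 < r := hr.1
            have habs : |1 - r ^ 2| = r ^ 2 - 1 := by
              rw [abs_of_nonpos (by nlinarith)]; ring
            have hrpow : (r - 1) ^ (-(1/2) : ℝ) = (Real.sqrt (r - 1))⁻¹ := by
              rw [Real.rpow_neg (by linarith), Real.sqrt_eq_rpow]
            rw [habs, hrpow]
            have hs1 : Real.sqrt (r - 1) ≤ Real.sqrt (r ^ 2 - 1) :=
              Real.sqrt_le_sqrt (by nlinarith)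
            have hs0 : 0 < Real.sqrt (r - 1) := Real.sqrt_pos.2 (by linarith)
            have key : r / Real.sqrt (r ^ 2 - 1) ≤ 2 / Real.sqrt (r - 1) :=
              div_le_div₀ (by norm_num) hr.2 hs0 hs1
            have hexp : Real.exp (-(c * gRad r)) ≤ 1 := exp_gRad_le_one r hc
            have hE0 : 0 ≤ Real.exp (-(c * gRad r)) := Real.exp_nonneg _
            have hXnn : 0 ≤ (Real.sqrt (r ^ 2 - 1))⁻¹ := inv_nonneg.2 (Real.sqrt_nonneg _)
            calc r * (D * Real.exp (-(c * gRad r)) / Real.sqrt (r ^ 2 - 1))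
                = (D * Real.exp (-(c * gRad r))) * (r * (Real.sqrt (r ^ 2 - 1))⁻¹) := by
                  rw [div_eq_mul_inv]; ring
              _ ≤ (D * 1) * (r * (Real.sqrt (r ^ 2 - 1))⁻¹) :=
                  mul_le_mul_of_nonneg_right (mul_le_mul_of_nonneg_left hexp hD)
                    (mul_nonneg (by linarith) hXnn)
              _ = D * (r / Real.sqrt (r ^ 2 - 1)) := by rw [div_eq_mul_inv]; ring
              _ ≤ D * (2 / Real.sqrt (r - 1)) := mul_le_mul_of_nonneg_left key hD
              _ = D * 2 * (Real.sqrt (r - 1))⁻¹ := by rw [div_eq_mul_inv]; ring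
        _ < ⊤ := by
            refine lint_of_integrableOn (Integrable.const_mul ?_ (D * 2))
            have h := rpow_half_int.comp_sub_right 1
            norm_num at h
            exact (intervalIntegrable_iff_integrableOn_Ioc_of_le (by norm_num)).1 h
    · calc ∫⁻ r in Ioi (2:ℝ), ENNReal.ofReal r *
            ENNReal.ofReal (D * Real.exp (-(c * gRad r)) / Real.sqrt |1 - r ^ 2|)
          ≤ ∫⁻ r in Ioi (2:ℝ),
              ENNReal.ofReal (D * ((4 / c) ^ 2 * Real.exp c) * Real.exp (-(c / 2) * r)) := by
            refine setLIntegral_mono' measurableSet_Ioi fun r hr => ?_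
            have hr2 : (2:ℝ) < r := hr
            have hr1 : (1:ℝ) < r := by linarith
            rw [← ENNReal.ofReal_mul (by linarith : (0:ℝ) ≤ r)]
            refine ENNReal.ofReal_le_ofReal ?_
            have habs : |1 - r ^ 2| = r ^ 2 - 1 := by
              rw [abs_of_nonpos (by nlinarith)]; ring
            rw [habs]
            have h1s : (1:ℝ) ≤ Real.sqrt (r ^ 2 - 1) :=
              (Real.le_sqrt zero_le_one (by nlinarith)).2 (by nlinarith)
            have hsle : (Real.sqrt (r ^ 2 - 1))⁻¹ ≤ r :=
              le_trans (inv_le_one_of_one_le₀ h1s) (by linarith)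
            have hkey := key_tail hc hr1 (gRad_lb hr1)
              (inv_nonneg.2 (Real.sqrt_nonneg _)) hsle
            calc r * (D * Real.exp (-(c * gRad r)) / Real.sqrt (r ^ 2 - 1))
                = D * (r * (Real.exp (-(c * gRad r)) * (Real.sqrt (r ^ 2 - 1))⁻¹)) := by
                  rw [div_eq_mul_inv]; ring
              _ ≤ D * ((4 / c) ^ 2 * Real.exp c * Real.exp (-(c / 2) * r)) :=
                  mul_le_mul_of_nonneg_left hkey hD
              _ = D * ((4 / c) ^ 2 * Real.exp c) * Real.exp (-(c / 2) * r) := by ring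
        _ < ⊤ := tail_lint 2 _ (half_pos hc)

noncomputable abbrev E2 := EuclideanSpace ℝ (Fin 2)

lemma lintegral_norm_radial' (f : ℝ → ℝ≥0∞) (hf : Measurable f) :
    ∫⁻ x : E2, f (‖x‖) =
      (volume : Measure E2).toSphere univ * ∫⁻ r in Ioi (0:ℝ), ENNReal.ofReal r * f r := by
  set μ : Measure E2 := volume with hμ
  have hdim : Module.finrank ℝ E2 - 1 = 1 := by
    rw [finrank_euclideanSpace_fin]
  have h1 : ∫⁻ x : E2, f (‖x‖) ∂μ
      = ∫⁻ x : ({(0:E2)}ᶜ : Set E2), f (‖(x : E2)‖) ∂(μ.comap (↑)) := by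
    have := lintegral_subtype_comap (μ := μ) (measurableSet_singleton (0:E2)).compl
      (fun y => f ‖y‖)
    rw [MeasureTheory.restrict_compl_singleton] at this
    exact this.symm
  have hmp := MeasureTheory.Measure.measurePreserving_homeomorphUnitSphereProd μ
  have hg : Measurable fun p : sphere (0:E2) 1 × Ioi (0:ℝ) => f p.2 :=
    hf.comp (measurable_subtype_coe.comp measurable_snd)
  have h2 : ∫⁻ x : ({(0:E2)}ᶜ : Set E2), f (‖(x : E2)‖) ∂(μ.comap (↑))
      = ∫⁻ p : sphere (0:E2) 1 × Ioi (0:ℝ), f p.2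
          ∂(μ.toSphere.prod (.volumeIoiPow (Module.finrank ℝ E2 - 1))) := by
    rw [← hmp.map_eq, lintegral_map hg hmp.measurable]
    simp
  have h3 : ∫⁻ p : sphere (0:E2) 1 × Ioi (0:ℝ), f p.2
          ∂(μ.toSphere.prod (.volumeIoiPow (Module.finrank ℝ E2 - 1)))
      = μ.toSphere univ * ∫⁻ r : Ioi (0:ℝ), f r ∂(Measure.volumeIoiPow 1) := by
    rw [hdim, lintegral_prod _ hg.aemeasurable]
    simp [lintegral_const, mul_comm]
  have h4 : ∫⁻ r : Ioi (0:ℝ), f r ∂(Measure.volumeIoiPow 1)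
      = ∫⁻ r in Ioi (0:ℝ), ENNReal.ofReal r * f r := by
    rw [Measure.volumeIoiPow,
      lintegral_withDensity_eq_lintegral_mul _
        ((measurable_subtype_coe.pow_const 1).ennreal_ofReal)
        (g := fun r : Ioi (0:ℝ) => f r) (hf.comp measurable_subtype_coe)]
    have h5 := lintegral_subtype_comap (μ := (volume : Measure ℝ))
      (measurableSet_Ioi (a := (0:ℝ))) (fun r => ENNReal.ofReal r * f r)
    simp only [Pi.mul_apply, pow_one]
    exact h5
  rw [h1, h2, h3, h4]

lemma gammaEv_eq_gRad (ξ : E2) : gammaEv ξ = gRad ‖ξ‖ := rfl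

lemma etaThree_im (ξ : E2) : (etaThree ξ).im = gammaEv ξ := by
  rw [etaThree]; split_ifs with hι
  · rw [gammaEv, if_neg (not_lt.2 hι)]; simp
  · simp


/-- The Born term of the fixed-frequency scattering operator has finite Hilbert–Schmidt
norm on the weighted space `L²_g`: for `V ∈ L¹(ℝ³)` supported in `{y₃ ≤ −h}`,
`∫∫ |∫ e^(ik(η̃⁻ − η⁺)·y) V(y) d³y|² · √(|1 − |η̃′|²|)/√(|1 − |η′|²|) d²η̃′ d²η′ < ∞`,
where `η⁺ = (η′, η₃(η′))` and `η̃⁻ = (η̃′, −η₃(η̃′))`. -/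
theorem stmt14 (h k : ℝ) (hh : 0 < h) (hk : 0 < k)
    (V : EuclideanSpace ℝ (Fin 3) → ℂ) (hV : Integrable V)
    (hsupp : ∀ y : EuclideanSpace ℝ (Fin 3), V y ≠ 0 → y 2 ≤ -h) :
    (∫⁻ η' : EuclideanSpace ℝ (Fin 2), ∫⁻ ηt' : EuclideanSpace ℝ (Fin 2),
        ENNReal.ofReal (
          ‖∫ y : EuclideanSpace ℝ (Fin 3),
              Complex.exp (Complex.I * (k : ℂ) *
                ((((ηt' 0 - η' 0) * y 0 + (ηt' 1 - η' 1) * y 1 : ℝ) : ℂ) +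
                  (-etaThree ηt' - etaThree η') * (y 2 : ℝ))) * V y‖ ^ 2 *
          Real.sqrt |1 - ‖ηt'‖ ^ 2| / Real.sqrt |1 - ‖η'‖ ^ 2|)) < ⊤ := by
  set c : ℝ := 2 * (k * h) with hcdef
  have hc : 0 < c := by positivity
  set C : ℝ := ∫ y, ‖V y‖ with hCdef
  have hCnn : 0 ≤ C := integral_nonneg fun y => norm_nonneg _
  -- pointwise bound on the Born integral
  have hF : ∀ η' ηt' : E2,
      ‖∫ y : EuclideanSpace ℝ (Fin 3),
          Complex.exp (Complex.I * (k : ℂ) *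
            ((((ηt' 0 - η' 0) * y 0 + (ηt' 1 - η' 1) * y 1 : ℝ) : ℂ) +
              (-etaThree ηt' - etaThree η') * (y 2 : ℝ))) * V y‖
        ≤ Real.exp (-(k * h) * (gammaEv η' + gammaEv ηt')) * C := by
    intro η' ηt'
    set M : ℝ := Real.exp (-(k * h) * (gammaEv η' + gammaEv ηt')) with hMdef
    have hg1 : 0 ≤ gammaEv η' := gRad_nonneg _
    have hg2 : 0 ≤ gammaEv ηt' := gRad_nonneg _
    have hpt : ∀ y : EuclideanSpace ℝ (Fin 3),
        ‖Complex.exp (Complex.I * (k : ℂ) *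
            ((((ηt' 0 - η' 0) * y 0 + (ηt' 1 - η' 1) * y 1 : ℝ) : ℂ) +
              (-etaThree ηt' - etaThree η') * (y 2 : ℝ))) * V y‖ ≤ M * ‖V y‖ := by
      intro y
      by_cases hy : V y = 0
      · simp [hy]
      · have ht : y 2 ≤ -h := hsupp y hy
        rw [norm_mul]
        refine mul_le_mul_of_nonneg_right ?_ (norm_nonneg _)
        have hzre : (Complex.I * (k : ℂ) *
            ((((ηt' 0 - η' 0) * y 0 + (ηt' 1 - η' 1) * y 1 : ℝ) : ℂ) +
              (-etaThree ηt' - etaThree η') * ((y 2 : ℝ) : ℂ))).re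
            = k * ((gammaEv ηt' + gammaEv η') * (y 2)) := by
          simp [Complex.mul_re, Complex.mul_im, Complex.add_re, Complex.add_im,
            Complex.sub_re, Complex.sub_im, Complex.neg_re, Complex.neg_im,
            Complex.I_re, Complex.I_im, Complex.ofReal_re, Complex.ofReal_im,
            etaThree_im]
          ring
        rw [Complex.norm_exp, hzre, hMdef]
        refine Real.exp_le_exp.2 ?_
        nlinarith [mul_nonneg hk.le (add_nonneg hg2 hg1)]
    calc ‖∫ y : EuclideanSpace ℝ (Fin 3),
          Complex.exp (Complex.I * (k : ℂ) *
            ((((ηt' 0 - η' 0) * y 0 + (ηt' 1 - η' 1) * y 1 : ℝ) : ℂ) +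
              (-etaThree ηt' - etaThree η') * (y 2 : ℝ))) * V y‖
        ≤ ∫ y, ‖Complex.exp (Complex.I * (k : ℂ) *
            ((((ηt' 0 - η' 0) * y 0 + (ηt' 1 - η' 1) * y 1 : ℝ) : ℂ) +
              (-etaThree ηt' - etaThree η') * (y 2 : ℝ))) * V y‖ :=
          norm_integral_le_integral_norm _
      _ ≤ ∫ y, M * ‖V y‖ :=
          integral_mono_of_nonneg (Filter.Eventually.of_forall fun y => norm_nonneg _)
            (hV.norm.const_mul M) (Filter.Eventually.of_forall hpt)
      _ = M * C := by rw [integral_const_mul]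
  -- the two radial comparison functions
  have key : ∀ η' ηt' : E2,
      ‖∫ y : EuclideanSpace ℝ (Fin 3),
          Complex.exp (Complex.I * (k : ℂ) *
            ((((ηt' 0 - η' 0) * y 0 + (ηt' 1 - η' 1) * y 1 : ℝ) : ℂ) +
              (-etaThree ηt' - etaThree η') * (y 2 : ℝ))) * V y‖ ^ 2 *
        Real.sqrt |1 - ‖ηt'‖ ^ 2| / Real.sqrt |1 - ‖η'‖ ^ 2|
      ≤ (C ^ 2 * Real.exp (-(c * gammaEv η')) / Real.sqrt |1 - ‖η'‖ ^ 2|) *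
          (Real.exp (-(c * gammaEv ηt')) * Real.sqrt |1 - ‖ηt'‖ ^ 2|) := by
    intro η' ηt'
    have h2 := pow_le_pow_left₀ (norm_nonneg _) (hF η' ηt') 2
    have hM2 : (Real.exp (-(k * h) * (gammaEv η' + gammaEv ηt')) * C) ^ 2
        = C ^ 2 * (Real.exp (-(c * gammaEv η')) * Real.exp (-(c * gammaEv ηt'))) := by
      rw [mul_pow, sq (Real.exp (-(k * h) * (gammaEv η' + gammaEv ηt'))), ← Real.exp_add,
        show -(k * h) * (gammaEv η' + gammaEv ηt') + -(k * h) * (gammaEv η' + gammaEv ηt')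
          = -(c * gammaEv η') + -(c * gammaEv ηt') from by rw [hcdef]; ring,
        Real.exp_add]
      ring
    calc ‖∫ y : EuclideanSpace ℝ (Fin 3),
          Complex.exp (Complex.I * (k : ℂ) *
            ((((ηt' 0 - η' 0) * y 0 + (ηt' 1 - η' 1) * y 1 : ℝ) : ℂ) +
              (-etaThree ηt' - etaThree η') * (y 2 : ℝ))) * V y‖ ^ 2 *
        Real.sqrt |1 - ‖ηt'‖ ^ 2| / Real.sqrt |1 - ‖η'‖ ^ 2|
        ≤ ((Real.exp (-(k * h) * (gammaEv η' + gammaEv ηt')) * C) ^ 2 *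
            Real.sqrt |1 - ‖ηt'‖ ^ 2|) / Real.sqrt |1 - ‖η'‖ ^ 2| := by
          rw [div_eq_mul_inv, div_eq_mul_inv]
          exact mul_le_mul_of_nonneg_right
            (mul_le_mul_of_nonneg_right h2 (Real.sqrt_nonneg _))
            (inv_nonneg.2 (Real.sqrt_nonneg _))
      _ = (C ^ 2 * Real.exp (-(c * gammaEv η')) / Real.sqrt |1 - ‖η'‖ ^ 2|) *
          (Real.exp (-(c * gammaEv ηt')) * Real.sqrt |1 - ‖ηt'‖ ^ 2|) := by
          rw [hM2, div_eq_mul_inv, div_eq_mul_inv]; ring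
  -- measurable radial profiles
  set fP : ℝ → ℝ≥0∞ := fun r =>
    ENNReal.ofReal (C ^ 2 * Real.exp (-(c * gRad r)) / Real.sqrt |1 - r ^ 2|) with hfPdef
  set fQ : ℝ → ℝ≥0∞ := fun r =>
    ENNReal.ofReal (Real.exp (-(c * gRad r)) * Real.sqrt |1 - r ^ 2|) with hfQdef
  have hmeasexp : Measurable fun r : ℝ => Real.exp (-(c * gRad r)) :=
    Real.continuous_exp.measurable.comp ((measurable_const.mul gRad_meas).neg)
  have hmeassqrt : Measurable fun r : ℝ => Real.sqrt |1 - r ^ 2| :=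
    Real.continuous_sqrt.measurable.comp
      ((measurable_const.sub (measurable_id.pow_const 2)).abs)
  have hfP : Measurable fP :=
    ((measurable_const.mul hmeasexp).div hmeassqrt).ennreal_ofReal
  have hfQ : Measurable fQ := (hmeasexp.mul hmeassqrt).ennreal_ofReal
  have hPlt : ∫⁻ ξ : E2, fP ‖ξ‖ < ⊤ := by
    rw [lintegral_norm_radial' fP hfP]
    exact ENNReal.mul_lt_top (measure_lt_top _ _) (lintP (C ^ 2) (sq_nonneg C) hc)
  have hQlt : ∫⁻ ξ : E2, fQ ‖ξ‖ < ⊤ := by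
    rw [lintegral_norm_radial' fQ hfQ]
    exact ENNReal.mul_lt_top (measure_lt_top _ _) (lintQ hc)
  calc (∫⁻ η' : EuclideanSpace ℝ (Fin 2), ∫⁻ ηt' : EuclideanSpace ℝ (Fin 2),
        ENNReal.ofReal (
          ‖∫ y : EuclideanSpace ℝ (Fin 3),
              Complex.exp (Complex.I * (k : ℂ) *
                ((((ηt' 0 - η' 0) * y 0 + (ηt' 1 - η' 1) * y 1 : ℝ) : ℂ) +
                  (-etaThree ηt' - etaThree η') * (y 2 : ℝ))) * V y‖ ^ 2 *
          Real.sqrt |1 - ‖ηt'‖ ^ 2| / Real.sqrt |1 - ‖η'‖ ^ 2|))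
      ≤ ∫⁻ η' : E2, ∫⁻ ηt' : E2, fP ‖η'‖ * fQ ‖ηt'‖ := by
        refine lintegral_mono fun η' => lintegral_mono fun ηt' => ?_
        have hPnn : 0 ≤ C ^ 2 * Real.exp (-(c * gammaEv η')) / Real.sqrt |1 - ‖η'‖ ^ 2| := by
          positivity
        rw [hfPdef, hfQdef]
        rw [show (fun r : ℝ => ENNReal.ofReal
            (C ^ 2 * Real.exp (-(c * gRad r)) / Real.sqrt |1 - r ^ 2|)) ‖η'‖
            = ENNReal.ofReal
            (C ^ 2 * Real.exp (-(c * gammaEv η')) / Real.sqrt |1 - ‖η'‖ ^ 2|) from rfl,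
          show (fun r : ℝ => ENNReal.ofReal
            (Real.exp (-(c * gRad r)) * Real.sqrt |1 - r ^ 2|)) ‖ηt'‖
            = ENNReal.ofReal
            (Real.exp (-(c * gammaEv ηt')) * Real.sqrt |1 - ‖ηt'‖ ^ 2|) from rfl,
          ← ENNReal.ofReal_mul hPnn]
        exact ENNReal.ofReal_le_ofReal (key η' ηt')
    _ = ∫⁻ η' : E2, fP ‖η'‖ * ∫⁻ ηt' : E2, fQ ‖ηt'‖ :=
        lintegral_congr fun η' => lintegral_const_mul' _ _ (by
          rw [hfPdef]; exact ENNReal.ofReal_ne_top)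
    _ = (∫⁻ η' : E2, fP ‖η'‖) * ∫⁻ ηt' : E2, fQ ‖ηt'‖ :=
        lintegral_mul_const' _ _ hQlt.ne
    _ < ⊤ := ENNReal.mul_lt_top hPlt hQlt
end
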